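/- arXiv:2312.13965 — 4 statements merged into one kernel-verified Lean document; each statement's English description precedes it below -/
import Mathlib

section
/- If G is a 3-uniform hypergraph with at least two edges, then there is a constant c > 0 such that r(G;q) ≥ c·q^{1/3} for every q ≥ 1. -/
/-- A 3-uniform hypergraph with vertices drawn from ℕ. -/
structure ThreeGraph where
  verts : Finset ℕ
  edges : Finset (Finset ℕ)
  edge_card : ∀ e ∈ edges, e.card = 3
  edge_sub : ∀ e ∈ edges, e ⊆ verts

/-- A 3-graph is tripartite if its vertex set can be partitioned into three parts so that
every edge has exactly one vertex in each part. -/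
def Tripartite (G : ThreeGraph) : Prop :=
  ∃ V1 V2 V3 : Finset ℕ,
    Disjoint V1 V2 ∧ Disjoint V1 V3 ∧ Disjoint V2 V3 ∧
    V1 ∪ V2 ∪ V3 = G.verts ∧
    ∀ e ∈ G.edges, (e ∩ V1).card = 1 ∧ (e ∩ V2).card = 1 ∧ (e ∩ V3).card = 1

/-- Membership in the family 𝒰₁: there is a vertex subset intersecting every edge in
exactly one vertex. -/
def InU1 (G : ThreeGraph) : Prop :=
  ∃ W : Finset ℕ, W ⊆ G.verts ∧ ∀ e ∈ G.edges, (e ∩ W).card = 1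

/-- `Reducible G H F` : `G` is reducible to the pair `(H, F)` by collapsing a collapsible
set `U` (with `F = G[U]`), where the new vertex of `H` is `v`. -/
def Reducible (G H F : ThreeGraph) : Prop :=
  ∃ (U : Finset ℕ) (v : ℕ),
    U ⊆ G.verts ∧ 2 ≤ U.card ∧ U.card < G.verts.card ∧
    (∀ e ∈ G.edges, (e ∩ U).card ≠ 2) ∧
    v ∉ G.verts ∧
    H.verts = (G.verts \ U) ∪ {v} ∧
    H.edges = G.edges.filter (fun e => e ∩ U = ∅) ∪
      (G.edges.filter (fun e => (e ∩ U).card = 1)).image (fun e => (e \ U) ∪ {v}) ∧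
    F.verts = U ∧
    F.edges = G.edges.filter (fun e => e ⊆ U)

/-- `MemU i G` means `G ∈ 𝒰ᵢ`: `𝒰₀` is the family of tripartite 3-graphs, `𝒰₁` of 3-graphs
with a vertex set meeting every edge exactly once, the families are nested, and for `i ≥ 2`,
`G ∈ 𝒰ᵢ` whenever `G` is reducible to `(H, F)` with `H ∈ 𝒰ᵢ₋₁` and `F ∈ 𝒰ᵢ`. -/
inductive MemU : ℕ → ThreeGraph → Prop where
  | zero (G : ThreeGraph) : Tripartite G → MemU 0 G
  | one (G : ThreeGraph) : InU1 G → MemU 1 G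
  | mono (i : ℕ) (G : ThreeGraph) : MemU i G → MemU (i + 1) G
  | reduce (i : ℕ) (G H F : ThreeGraph) :
      Reducible G H F → MemU (i + 1) H → MemU (i + 2) F → MemU (i + 2) G

/-- `G ∈ 𝒰 = ⋃ᵢ 𝒰ᵢ`. -/
def InU (G : ThreeGraph) : Prop := ∃ i, MemU i G

/-- A monochromatic copy of `G` in color `i` under the coloring `χ` of the triples of
`Fin N`. -/
def MonoCopy {N q : ℕ} (χ : Finset (Fin N) → Fin q) (i : Fin q) (G : ThreeGraph) : Prop :=
  ∃ f : ℕ → Fin N, Set.InjOn f ↑G.verts ∧ ∀ e ∈ G.edges, χ (e.image f) = i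

/-- `N` vertices suffice to find, in any `q`-coloring, a monochromatic copy of `Gs i` in
color `i` for some `i`. -/
def RamseyProp {q : ℕ} (Gs : Fin q → ThreeGraph) (N : ℕ) : Prop :=
  ∀ χ : Finset (Fin N) → Fin q, ∃ i : Fin q, MonoCopy χ i (Gs i)

/-- The Ramsey number `r(G₁, …, G_q)`. -/
noncomputable def ramseyNumber {q : ℕ} (Gs : Fin q → ThreeGraph) : ℕ :=
  sInf {N | RamseyProp Gs N}

/-- The `q`-color Ramsey number `r(G; q)`. -/
noncomputable def rq (G : ThreeGraph) (q : ℕ) : ℕ :=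
  ramseyNumber (fun _ : Fin q => G)


open Filter

lemma exists_const_mem {α : Type*} [Finite α] [Nonempty α] (U : Ultrafilter ℕ) (g : ℕ → α) :
    ∃ c, {n | g n = c} ∈ U := by
  by_contra h
  push_neg at h
  have h' : ∀ c : α, {n | g n ≠ c} ∈ U := fun c =>
    (Ultrafilter.compl_mem_iff_notMem (s := {n | g n = c})).mpr (h c)
  have hmem : (⋂ c : α, {n | g n ≠ c}) ∈ U := Filter.iInter_mem.mpr h'
  obtain ⟨n, hn⟩ := Ultrafilter.nonempty_of_mem hmem
  simp only [Set.mem_iInter, Set.mem_setOf_eq] at hn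
  exact hn (g n) rfl

lemma exists_sorted_three {s : Finset ℕ} (hs : s.card = 3) :
    ∃ x y z : ℕ, x < y ∧ y < z ∧ s = {x, y, z} := by
  obtain ⟨a, b, c, hab, hac, hbc, rfl⟩ := Finset.card_eq_three.mp hs
  rcases Nat.lt_trichotomy a b with h1 | h1 | h1 <;>
  rcases Nat.lt_trichotomy a c with h2 | h2 | h2 <;>
  rcases Nat.lt_trichotomy b c with h3 | h3 | h3 <;>
  first
  | omega
  | exact ⟨a, b, c, by omega, by omega, by ext t; simp only [Finset.mem_insert, Finset.mem_singleton]; try tauto⟩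
  | exact ⟨a, c, b, by omega, by omega, by ext t; simp only [Finset.mem_insert, Finset.mem_singleton]; try tauto⟩
  | exact ⟨b, a, c, by omega, by omega, by ext t; simp only [Finset.mem_insert, Finset.mem_singleton]; try tauto⟩
  | exact ⟨b, c, a, by omega, by omega, by ext t; simp only [Finset.mem_insert, Finset.mem_singleton]; try tauto⟩
  | exact ⟨c, a, b, by omega, by omega, by ext t; simp only [Finset.mem_insert, Finset.mem_singleton]; try tauto⟩
  | exact ⟨c, b, a, by omega, by omega, by ext t; simp only [Finset.mem_insert, Finset.mem_singleton]; try tauto⟩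

lemma exists_ramseyProp (G : ThreeGraph) (q : ℕ) (hq : 1 ≤ q) :
    ∃ N, RamseyProp (fun _ : Fin q => G) N := by
  have hq0 : Nonempty (Fin q) := ⟨⟨0, hq⟩⟩
  by_contra hcon
  push_neg at hcon
  have hbad : ∀ N, ∃ χ : Finset (Fin N) → Fin q, ∀ i, ¬ MonoCopy χ i G := by
    intro N
    have h := hcon N
    unfold RamseyProp at h
    push_neg at h
    exact h
  choose χN hχN using hbad
  obtain ⟨U, hU⟩ := Ultrafilter.exists_le (Filter.cofinite : Filter ℕ)
  set χ'' : ℕ → Finset ℕ → Fin q := fun N e =>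
    if h : ∀ x ∈ e, x < N then χN N (e.attachFin h) else ⟨0, hq⟩ with hχ''def
  choose χ hχ using fun e => exists_const_mem U (fun N => χ'' N e)
  choose c2 hc2 using fun a b => exists_const_mem U (fun x => χ {a, b, x})
  choose c1 hc1 using fun a => exists_const_mem U (fun b => c2 a b)
  obtain ⟨c0, hc0⟩ := exists_const_mem U (fun a => c1 a)
  -- build a "good" set of any size
  have hstep : ∀ n : ℕ, ∃ F : Finset ℕ, F.card = n ∧
      (∀ x ∈ F, c1 x = c0) ∧
      (∀ x ∈ F, ∀ y ∈ F, x < y → c2 x y = c0) ∧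
      (∀ x ∈ F, ∀ y ∈ F, ∀ z ∈ F, x < y → y < z → χ {x, y, z} = c0) := by
    intro n
    induction n with
    | zero => exact ⟨∅, rfl, by simp, by simp, by simp⟩
    | succ n ih =>
      obtain ⟨F, hFcard, hF1, hF2, hF3⟩ := ih
      have hA : {b | c1 b = c0} ∈ U := hc0
      have hB : (⋂ x ∈ (F : Set ℕ), {b | c2 x b = c0}) ∈ U := by
        refine (Filter.biInter_mem F.finite_toSet).mpr ?_
        intro x hx
        have h := hc1 x
        rw [hF1 x hx] at h
        exact h
      have hC : (⋂ x ∈ (F : Set ℕ), ⋂ y ∈ (F : Set ℕ),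
          {b | x < y → χ {x, y, b} = c0}) ∈ U := by
        refine (Filter.biInter_mem F.finite_toSet).mpr ?_
        intro x hx
        refine (Filter.biInter_mem F.finite_toSet).mpr ?_
        intro y hy
        by_cases hxy : x < y
        · have h := hc2 x y
          rw [hF2 x hx y hy hxy] at h
          exact Filter.mem_of_superset h (fun b hb _ => hb)
        · have : {b : ℕ | x < y → χ {x, y, b} = c0} = Set.univ := by
            ext b; simp [hxy]
          rw [this]; exact Filter.univ_mem
      have hD : {b | F.sup id < b} ∈ U := by
        apply hU
        rw [Filter.mem_cofinite]
        have : {b | F.sup id < b}ᶜ = Set.Iic (F.sup id) := by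
          ext b; simp [Set.mem_Iic, Nat.not_lt]
        rw [this]
        exact Set.finite_Iic _
      obtain ⟨b, hb⟩ := Ultrafilter.nonempty_of_mem
        (Filter.inter_mem (Filter.inter_mem hA hB) (Filter.inter_mem hC hD))
      obtain ⟨⟨hb1, hb2⟩, hb3, hb4⟩ := hb
      simp only [Set.mem_iInter, Set.mem_setOf_eq, Finset.mem_coe] at hb1 hb2 hb3 hb4
      have hblt : ∀ x ∈ F, x < b := fun x hx =>
        lt_of_le_of_lt (Finset.le_sup (f := id) hx) hb4
      have hbnot : b ∉ F := fun h => lt_irrefl b (hblt b h)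
      refine ⟨insert b F, by rw [Finset.card_insert_of_notMem hbnot, hFcard], ?_, ?_, ?_⟩
      · intro x hx
        rcases Finset.mem_insert.mp hx with rfl | hx'
        · exact hb1
        · exact hF1 x hx'
      · intro x hx y hy hxy
        rcases Finset.mem_insert.mp hx with rfl | hx'
        · rcases Finset.mem_insert.mp hy with rfl | hy'
          · omega
          · exact absurd (hblt y hy') (by omega)
        · rcases Finset.mem_insert.mp hy with rfl | hy'
          · exact hb2 x hx'
          · exact hF2 x hx' y hy' hxy
      · intro x hx y hy z hz hxy hyz
        rcases Finset.mem_insert.mp hx with rfl | hx'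
        · rcases Finset.mem_insert.mp hy with rfl | hy'
          · omega
          · exact absurd (hblt y hy') (by omega)
        · rcases Finset.mem_insert.mp hy with rfl | hy'
          · rcases Finset.mem_insert.mp hz with rfl | hz'
            · omega
            · exact absurd (hblt z hz') (by omega)
          · rcases Finset.mem_insert.mp hz with rfl | hz'
            · exact hb3 x hx' y hy' hxy
            · exact hF3 x hx' y hy' z hz' hxy hyz
  obtain ⟨F, hFcard, hF1, hF2, hF3⟩ := hstep G.verts.card
  -- an injection from the vertices of G into F
  have hcards : Fintype.card (↥G.verts) = Fintype.card (↥F) := by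
    rw [Fintype.card_coe, Fintype.card_coe, hFcard]
  let eqv : (↥G.verts) ≃ (↥F) := Fintype.equivOfCardEq hcards
  set f : ℕ → ℕ := fun x => if h : x ∈ G.verts then ((eqv ⟨x, h⟩ : ↥F) : ℕ) else 0 with hfdef
  have hfmem : ∀ x ∈ G.verts, f x ∈ F := by
    intro x hx
    simp only [hfdef, dif_pos hx]
    exact (eqv ⟨x, hx⟩).2
  have hfinj : Set.InjOn f ↑G.verts := by
    intro x hx y hy hxy
    have hx' : x ∈ G.verts := hx
    have hy' : y ∈ G.verts := hy
    simp only [hfdef, dif_pos hx', dif_pos hy'] at hxy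
    have h := eqv.injective (Subtype.ext hxy)
    exact congrArg Subtype.val h
  have hedgecol : ∀ e ∈ G.edges, χ (e.image f) = c0 := by
    intro e he
    have hsub : e.image f ⊆ F := by
      intro m hm
      obtain ⟨a, ha, rfl⟩ := Finset.mem_image.mp hm
      exact hfmem a (G.edge_sub e he ha)
    have hcard3 : (e.image f).card = 3 := by
      rw [Finset.card_image_of_injOn (hfinj.mono (Finset.coe_subset.mpr (G.edge_sub e he)))]
      exact G.edge_card e he
    obtain ⟨x, y, z, hxy, hyz, heq⟩ := exists_sorted_three hcard3
    rw [heq] at hsub ⊢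
    have hx : x ∈ F := hsub (by simp)
    have hy : y ∈ F := hsub (by simp)
    have hz : z ∈ F := hsub (by simp)
    exact hF3 x hx y hy z hz hxy hyz
  -- pick a finite N compatible with all edge colors
  have hNmem : ((⋂ e ∈ (G.edges : Set (Finset ℕ)), {N | χ'' N (e.image f) = c0}) ∩
      {N | F.sup id < N}) ∈ U := by
    apply Filter.inter_mem
    · refine (Filter.biInter_mem G.edges.finite_toSet).mpr ?_
      intro e he
      have h := hχ (e.image f)
      rw [hedgecol e (Finset.mem_coe.mp he)] at h
      exact h
    · apply hU
      rw [Filter.mem_cofinite]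
      have : {N | F.sup id < N}ᶜ = Set.Iic (F.sup id) := by
        ext b; simp [Set.mem_Iic, Nat.not_lt]
      rw [this]
      exact Set.finite_Iic _
  obtain ⟨N, hN1, hN2⟩ := Ultrafilter.nonempty_of_mem hNmem
  simp only [Set.mem_iInter, Set.mem_setOf_eq, Finset.mem_coe] at hN1 hN2
  have hFN : ∀ y ∈ F, y < N := fun y hy =>
    lt_of_le_of_lt (Finset.le_sup (f := id) hy) hN2
  have hN0 : 0 < N := lt_of_le_of_lt (Nat.zero_le _) hN2
  set g : ℕ → Fin N := fun x => if h : f x < N then ⟨f x, h⟩ else ⟨0, hN0⟩ with hgdef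
  have hg : ∀ x ∈ G.verts, (g x : ℕ) = f x := by
    intro x hx
    have : f x < N := hFN _ (hfmem x hx)
    simp [hgdef, dif_pos this]
  have hginj : Set.InjOn g ↑G.verts := by
    intro x hx y hy hxy
    apply hfinj hx hy
    rw [← hg x hx, ← hg y hy, hxy]
  apply hχN N c0
  refine ⟨g, hginj, ?_⟩
  intro e he
  have hlt : ∀ m ∈ e.image f, m < N := by
    intro m hm
    obtain ⟨a, ha, rfl⟩ := Finset.mem_image.mp hm
    exact hFN _ (hfmem a (G.edge_sub e he ha))
  have himg : e.image g = (e.image f).attachFin hlt := by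
    ext a
    rw [Finset.mem_attachFin]
    constructor
    · intro h
      obtain ⟨t, ht, rfl⟩ := Finset.mem_image.mp h
      have htv : t ∈ G.verts := G.edge_sub e he ht
      rw [hg t htv]
      exact Finset.mem_image.mpr ⟨t, ht, rfl⟩
    · intro h
      obtain ⟨t, ht, htt⟩ := Finset.mem_image.mp h
      refine Finset.mem_image.mpr ⟨t, ht, ?_⟩
      have htv : t ∈ G.verts := G.edge_sub e he ht
      exact Fin.ext (by rw [hg t htv, htt])
  rw [himg]
  have h := hN1 e he
  rw [hχ''def] at h
  simp only at h
  rw [dif_pos hlt] at h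
  exact h

lemma ramsey_lb (G : ThreeGraph) (hG : 2 ≤ G.edges.card) {q N : ℕ} (hq : 1 ≤ q)
    (hR : RamseyProp (fun _ : Fin q => G) N) : q < N.choose 3 := by
  by_contra hle
  push_neg at hle
  have hcard : Fintype.card {s : Finset (Fin N) // s.card = 3} ≤ Fintype.card (Fin q) := by
    rw [Fintype.card_finset_len, Fintype.card_fin, Fintype.card_fin]
    exact hle
  obtain ⟨emb⟩ := Function.Embedding.nonempty_of_card_le hcard
  obtain ⟨i, f, hf, hmono⟩ := hR (fun s => if h : s.card = 3 then emb ⟨s, h⟩ else ⟨0, hq⟩)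
  obtain ⟨e1, he1, e2, he2, hne⟩ := Finset.one_lt_card.mp hG
  have himg : ∀ e ∈ G.edges, (e.image f).card = 3 := by
    intro e he
    rw [Finset.card_image_of_injOn (hf.mono (Finset.coe_subset.mpr (G.edge_sub e he)))]
    exact G.edge_card e he
  have h1 := hmono e1 he1
  have h2 := hmono e2 he2
  simp only [dif_pos (himg e1 he1)] at h1
  simp only [dif_pos (himg e2 he2)] at h2
  have himgeq : e1.image f = e2.image f := by
    have := emb.injective (h1.trans h2.symm)
    exact congrArg Subtype.val this
  apply hne
  ext a
  constructor
  · intro ha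
    have : f a ∈ e2.image f := himgeq ▸ Finset.mem_image_of_mem f ha
    obtain ⟨b, hb, hba⟩ := Finset.mem_image.mp this
    have : b = a := hf (G.edge_sub e2 he2 hb) (G.edge_sub e1 he1 ha) hba
    exact this ▸ hb
  · intro ha
    have : f a ∈ e1.image f := himgeq ▸ Finset.mem_image_of_mem f ha
    obtain ⟨b, hb, hba⟩ := Finset.mem_image.mp this
    have : b = a := hf (G.edge_sub e1 he1 hb) (G.edge_sub e2 he2 ha) hba
    exact this ▸ hb

/-- If `G` is a 3-uniform hypergraph with at least two edges, then there is a
constant `c > 0` such that `r(G; q) ≥ c · q^(1/3)` for every `q ≥ 1`. -/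
theorem stmt0 (G : ThreeGraph) (hG : 2 ≤ G.edges.card) :
    ∃ c : ℝ, 0 < c ∧ ∀ q : ℕ, 1 ≤ q → c * (q : ℝ) ^ ((1 : ℝ) / 3) ≤ (rq G q : ℝ) := by
  refine ⟨1, one_pos, ?_⟩
  intro q hq
  rw [one_mul]
  have hne : {N | RamseyProp (fun _ : Fin q => G) N}.Nonempty := exists_ramseyProp G q hq
  have hmem : RamseyProp (fun _ : Fin q => G) (rq G q) := Nat.sInf_mem hne
  have h3 : q < (rq G q).choose 3 := ramsey_lb G hG hq hmem
  have h4 : (q : ℝ) ≤ ((rq G q : ℝ)) ^ (3 : ℕ) := by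
    have h := lt_of_lt_of_le h3 (Nat.choose_le_pow (rq G q) 3)
    exact_mod_cast h.le
  calc (q : ℝ) ^ ((1 : ℝ) / 3) ≤ (((rq G q : ℝ)) ^ (3 : ℕ)) ^ ((1 : ℝ) / 3) :=
        Real.rpow_le_rpow (Nat.cast_nonneg q) h4 (by norm_num)
    _ = (rq G q : ℝ) := by
        rw [← Real.rpow_natCast ((rq G q : ℝ)) 3, ← Real.rpow_mul (Nat.cast_nonneg _)]
        norm_num
end

section
/- If G is a tripartite 3-uniform hypergraph, then there is a constant C = C(G) such that r(G;q) ≤ q^C for all sufficiently large q. -/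
lemma pow_div_le_choose' (k : ℕ) : ∀ n : ℕ, (n / k) ^ k ≤ n.choose k := by
  induction k with
  | zero => intro n; simp
  | succ k ih =>
    intro n
    set d := n / (k + 1) with hd
    rcases Nat.eq_zero_or_pos d with h0 | hpos
    · simp [h0]
    · have hdk : d * (k + 1) ≤ n := Nat.div_mul_le_self n (k+1)
      have hexp : d * (k + 1) = d * k + d := by ring
      have hn1 : 1 ≤ n := by omega
      have hiden : n * (n - 1).choose k = n.choose (k + 1) * (k + 1) := by
        have := Nat.add_one_mul_choose_eq (n - 1) k
        rwa [Nat.sub_add_cancel hn1] at this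
      rcases Nat.eq_zero_or_pos k with hk0 | hk1
      · subst hk0; simpa [Nat.choose_one_right] using hdk
      · have hdle : d ≤ (n - 1) / k := by
          rw [Nat.le_div_iff_mul_le hk1]
          omega
        have h1 : d ^ k ≤ (n - 1).choose k :=
          le_trans (Nat.pow_le_pow_left hdle k) (ih (n - 1))
        have h2 : d ^ (k + 1) * (k + 1) ≤ n.choose (k + 1) * (k + 1) := by
          calc d ^ (k + 1) * (k + 1) = (d * (k + 1)) * d ^ k := by ring
            _ ≤ n * (n - 1).choose k := Nat.mul_le_mul hdk h1
            _ = n.choose (k + 1) * (k + 1) := hiden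
        exact Nat.le_of_mul_le_mul_right h2 (by omega)

lemma kst {α β : Type} [DecidableEq α] [DecidableEq β] (U : Finset α) (W : Finset β)
    (Nf : β → Finset α) (hN : ∀ w ∈ W, Nf w ⊆ U) (t s D : ℕ)
    (hcond : (s - 1) * (U.card.choose t) * U.card + W.card * (D - 1) * D.choose t
      < (∑ w ∈ W, (Nf w).card) * D.choose t) :
    ∃ T : Finset α, T ⊆ U ∧ T.card = t ∧ s ≤ (W.filter fun w => T ⊆ Nf w).card := by
  by_contra hcon
  push_neg at hcon
  have keyA : ∑ w ∈ W, ((Nf w).card.choose t)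
      = ∑ T ∈ U.powersetCard t, (W.filter fun w => T ⊆ Nf w).card := by
    calc ∑ w ∈ W, ((Nf w).card.choose t)
        = ∑ w ∈ W, ((U.powersetCard t).filter fun T => T ⊆ Nf w).card := by
          refine Finset.sum_congr rfl fun w hw => ?_
          rw [← Finset.card_powersetCard]
          congr 1
          ext T
          simp only [Finset.mem_powersetCard, Finset.mem_filter]
          exact ⟨fun ⟨h1, h2⟩ => ⟨⟨h1.trans (hN w hw), h2⟩, h1⟩, fun ⟨⟨_, h2⟩, h3⟩ => ⟨h3, h2⟩⟩
      _ = ∑ w ∈ W, ∑ T ∈ U.powersetCard t, if T ⊆ Nf w then 1 else 0 := by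
          simp only [Finset.card_filter]
      _ = ∑ T ∈ U.powersetCard t, ∑ w ∈ W, if T ⊆ Nf w then 1 else 0 := Finset.sum_comm
      _ = ∑ T ∈ U.powersetCard t, (W.filter fun w => T ⊆ Nf w).card := by
          simp only [Finset.card_filter]
  have keyA' : ∑ w ∈ W, ((Nf w).card.choose t) ≤ (s - 1) * U.card.choose t := by
    rw [keyA]
    calc ∑ T ∈ U.powersetCard t, (W.filter fun w => T ⊆ Nf w).card
        ≤ ∑ _T ∈ U.powersetCard t, (s - 1) := by
          refine Finset.sum_le_sum fun T hT => ?_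
          rw [Finset.mem_powersetCard] at hT
          have := hcon T hT.1 hT.2
          omega
      _ = (s - 1) * U.card.choose t := by
          rw [Finset.sum_const, smul_eq_mul, Finset.card_powersetCard, mul_comm]
  have key1 : ∑ w ∈ W, (Nf w).card
      ≤ (W.filter fun w => D ≤ (Nf w).card).card * U.card + W.card * (D - 1) := by
    have hsplit : (∑ w ∈ W.filter (fun w => D ≤ (Nf w).card), (Nf w).card)
        + ∑ w ∈ W.filter (fun w => ¬ D ≤ (Nf w).card), (Nf w).card
        = ∑ w ∈ W, (Nf w).card := Finset.sum_filter_add_sum_filter_not W _ _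
    have h1 : ∑ w ∈ W.filter (fun w => D ≤ (Nf w).card), (Nf w).card
        ≤ (W.filter fun w => D ≤ (Nf w).card).card * U.card := by
      calc ∑ w ∈ W.filter (fun w => D ≤ (Nf w).card), (Nf w).card
          ≤ ∑ _w ∈ W.filter (fun w => D ≤ (Nf w).card), U.card :=
            Finset.sum_le_sum fun w hw =>
              Finset.card_le_card (hN w (Finset.mem_filter.mp hw).1)
        _ = _ := by rw [Finset.sum_const, smul_eq_mul]
    have h2 : ∑ w ∈ W.filter (fun w => ¬ D ≤ (Nf w).card), (Nf w).card
        ≤ W.card * (D - 1) := by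
      calc ∑ w ∈ W.filter (fun w => ¬ D ≤ (Nf w).card), (Nf w).card
          ≤ ∑ _w ∈ W.filter (fun w => ¬ D ≤ (Nf w).card), (D - 1) := by
            refine Finset.sum_le_sum fun w hw => ?_
            have := (Finset.mem_filter.mp hw).2
            omega
        _ = (W.filter (fun w => ¬ D ≤ (Nf w).card)).card * (D - 1) := by
            rw [Finset.sum_const, smul_eq_mul]
        _ ≤ W.card * (D - 1) :=
            Nat.mul_le_mul_right _ (Finset.card_le_card (Finset.filter_subset _ _))
    omega
  have key2 : (W.filter fun w => D ≤ (Nf w).card).card * D.choose t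
      ≤ ∑ w ∈ W, ((Nf w).card.choose t) := by
    calc (W.filter fun w => D ≤ (Nf w).card).card * D.choose t
        = ∑ _w ∈ W.filter (fun w => D ≤ (Nf w).card), D.choose t := by
          rw [Finset.sum_const, smul_eq_mul]
      _ ≤ ∑ w ∈ W.filter (fun w => D ≤ (Nf w).card), ((Nf w).card.choose t) :=
          Finset.sum_le_sum fun w hw => Nat.choose_le_choose t (Finset.mem_filter.mp hw).2
      _ ≤ ∑ w ∈ W, ((Nf w).card.choose t) :=
          Finset.sum_le_sum_of_subset (Finset.filter_subset _ _)
  set h := (W.filter fun w => D ≤ (Nf w).card).card with hh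
  have hc2 : (∑ w ∈ W, (Nf w).card) * D.choose t
      ≤ h * U.card * D.choose t + W.card * (D - 1) * D.choose t := by
    calc (∑ w ∈ W, (Nf w).card) * D.choose t
        ≤ (h * U.card + W.card * (D - 1)) * D.choose t := Nat.mul_le_mul_right _ key1
      _ = h * U.card * D.choose t + W.card * (D - 1) * D.choose t := by ring
  have hc3 : (s - 1) * U.card.choose t * U.card < h * U.card * D.choose t := by omega
  have hc4 : (s - 1) * U.card.choose t < h * D.choose t := by
    have hlt : ((s - 1) * U.card.choose t) * U.card < (h * D.choose t) * U.card := by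
      calc ((s - 1) * U.card.choose t) * U.card < h * U.card * D.choose t := hc3
        _ = (h * D.choose t) * U.card := by ring
    exact Nat.lt_of_mul_lt_mul_right hlt
  omega





lemma arith1 (P t : ℕ) (ht : 1 ≤ t) (htP : t ≤ P) (hP : 2 ≤ P) :
    (t * P ^ (2*t*t+11*t+7) + P ^ (2*t*t+11*t+8) - 1)
        * ((P ^ (t*t+6*t+6)).choose t) * P ^ (t*t+6*t+6)
      + (P ^ (t*t+6*t+6) * P ^ (t*t+6*t+6)) * (t * P ^ (t*t+6*t+5) - 1)
        * ((t * P ^ (t*t+6*t+5)).choose t)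
      < (2 * t * P ^ (3*t*t+18*t+17)) * ((t * P ^ (t*t+6*t+5)).choose t) := by
  have hP1 : (1:ℕ) < P := hP
  have hDc : P ^ ((t*t+6*t+5)*t) ≤ (t * P ^ (t*t+6*t+5)).choose t := by
    have h := pow_div_le_choose' t (t * P ^ (t*t+6*t+5))
    rwa [Nat.mul_div_cancel_left _ (by omega : 0 < t), ← pow_mul] at h
  have hMc : (P ^ (t*t+6*t+6)).choose t ≤ P ^ ((t*t+6*t+6)*t) := by
    rw [pow_mul]; exact Nat.choose_le_pow _ t
  -- s - 1 ≤ 2 * P^A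
  have hs : t * P ^ (2*t*t+11*t+7) + P ^ (2*t*t+11*t+8) - 1
      ≤ 2 * P ^ (2*t*t+11*t+8) := by
    have h1 : t * P ^ (2*t*t+11*t+7) ≤ P ^ (2*t*t+11*t+8) := by
      calc t * P ^ (2*t*t+11*t+7) ≤ P * P ^ (2*t*t+11*t+7) :=
            Nat.mul_le_mul_right _ htP
        _ = P ^ (2*t*t+11*t+7+1) := by rw [pow_succ]; ring
        _ = P ^ (2*t*t+11*t+8) := by congr 1
    omega
  -- term 1 bound
  have hterm1 : (t * P ^ (2*t*t+11*t+7) + P ^ (2*t*t+11*t+8) - 1)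
        * ((P ^ (t*t+6*t+6)).choose t) * P ^ (t*t+6*t+6)
      ≤ 2 * P ^ ((2*t*t+11*t+8) + (t*t+6*t+6)*t + (t*t+6*t+6)) := by
    calc (t * P ^ (2*t*t+11*t+7) + P ^ (2*t*t+11*t+8) - 1)
          * ((P ^ (t*t+6*t+6)).choose t) * P ^ (t*t+6*t+6)
        ≤ (2 * P ^ (2*t*t+11*t+8)) * P ^ ((t*t+6*t+6)*t) * P ^ (t*t+6*t+6) :=
          Nat.mul_le_mul (Nat.mul_le_mul hs hMc) le_rfl
      _ = 2 * P ^ ((2*t*t+11*t+8) + (t*t+6*t+6)*t + (t*t+6*t+6)) := by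
          rw [pow_add, pow_add]; ring
  -- term 2 bound
  have hterm2 : (P ^ (t*t+6*t+6) * P ^ (t*t+6*t+6)) * (t * P ^ (t*t+6*t+5) - 1)
        * ((t * P ^ (t*t+6*t+5)).choose t)
      ≤ (t * P ^ (3*t*t+18*t+17)) * ((t * P ^ (t*t+6*t+5)).choose t) := by
    refine Nat.mul_le_mul_right _ ?_
    calc (P ^ (t*t+6*t+6) * P ^ (t*t+6*t+6)) * (t * P ^ (t*t+6*t+5) - 1)
        ≤ (P ^ (t*t+6*t+6) * P ^ (t*t+6*t+6)) * (t * P ^ (t*t+6*t+5)) :=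
          Nat.mul_le_mul_left _ (Nat.sub_le _ _)
      _ = t * P ^ ((t*t+6*t+6) + (t*t+6*t+6) + (t*t+6*t+5)) := by
          rw [pow_add, pow_add]; ring
      _ = t * P ^ (3*t*t+18*t+17) := by congr 2; ring
  -- key strict inequality
  have hkey : 2 * P ^ ((2*t*t+11*t+8) + (t*t+6*t+6)*t + (t*t+6*t+6))
      < t * P ^ (3*t*t+18*t+17) * ((t * P ^ (t*t+6*t+5)).choose t) := by
    calc 2 * P ^ ((2*t*t+11*t+8) + (t*t+6*t+6)*t + (t*t+6*t+6))
        ≤ P * P ^ ((2*t*t+11*t+8) + (t*t+6*t+6)*t + (t*t+6*t+6)) :=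
          Nat.mul_le_mul_right _ hP
      _ = P ^ ((2*t*t+11*t+8) + (t*t+6*t+6)*t + (t*t+6*t+6) + 1) := by
          rw [pow_succ]; ring
      _ < P ^ ((3*t*t+18*t+17) + (t*t+6*t+5)*t) := by
          refine Nat.pow_lt_pow_right hP1 ?_
          nlinarith
      _ = P ^ (3*t*t+18*t+17) * P ^ ((t*t+6*t+5)*t) := pow_add P _ _
      _ ≤ t * P ^ (3*t*t+18*t+17) * ((t * P ^ (t*t+6*t+5)).choose t) := by
          calc P ^ (3*t*t+18*t+17) * P ^ ((t*t+6*t+5)*t)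
              ≤ P ^ (3*t*t+18*t+17) * ((t * P ^ (t*t+6*t+5)).choose t) :=
                Nat.mul_le_mul_left _ hDc
            _ ≤ t * P ^ (3*t*t+18*t+17) * ((t * P ^ (t*t+6*t+5)).choose t) := by
                refine Nat.mul_le_mul_right _ ?_
                calc P ^ (3*t*t+18*t+17) = 1 * P ^ (3*t*t+18*t+17) := (one_mul _).symm
                  _ ≤ t * P ^ (3*t*t+18*t+17) := Nat.mul_le_mul_right _ ht
  have hfin : (2 * t * P ^ (3*t*t+18*t+17)) * ((t * P ^ (t*t+6*t+5)).choose t)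
      = t * P ^ (3*t*t+18*t+17) * ((t * P ^ (t*t+6*t+5)).choose t)
        + t * P ^ (3*t*t+18*t+17) * ((t * P ^ (t*t+6*t+5)).choose t) := by ring
  omega

lemma arith2 (P t : ℕ) (ht : 1 ≤ t) (htP : t ≤ P) (hP : 2 ≤ P) :
    (t - 1) * ((P ^ (t*t+6*t+6)).choose t) * P ^ (t*t+6*t+6)
      + P ^ (t*t+6*t+6) * (t * P ^ (t*t+5*t+1) - 1) * ((t * P ^ (t*t+5*t+1)).choose t)
      < (t * P ^ (2*t*t+11*t+7) + P ^ (2*t*t+11*t+8)) * ((t * P ^ (t*t+5*t+1)).choose t) := by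
  have hP1 : (1:ℕ) < P := hP
  have hDc : P ^ ((t*t+5*t+1)*t) ≤ (t * P ^ (t*t+5*t+1)).choose t := by
    have h := pow_div_le_choose' t (t * P ^ (t*t+5*t+1))
    rwa [Nat.mul_div_cancel_left _ (by omega : 0 < t), ← pow_mul] at h
  have hMc : (P ^ (t*t+6*t+6)).choose t ≤ P ^ ((t*t+6*t+6)*t) := by
    rw [pow_mul]; exact Nat.choose_le_pow _ t
  have hterm1 : (t - 1) * ((P ^ (t*t+6*t+6)).choose t) * P ^ (t*t+6*t+6)
      < P ^ (2*t*t+11*t+8) * ((t * P ^ (t*t+5*t+1)).choose t) := by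
    calc (t - 1) * ((P ^ (t*t+6*t+6)).choose t) * P ^ (t*t+6*t+6)
        ≤ P * P ^ ((t*t+6*t+6)*t) * P ^ (t*t+6*t+6) :=
          Nat.mul_le_mul (Nat.mul_le_mul (by omega) hMc) le_rfl
      _ = P ^ (1 + (t*t+6*t+6)*t + (t*t+6*t+6)) := by ring
      _ < P ^ ((2*t*t+11*t+8) + (t*t+5*t+1)*t) := by
          refine Nat.pow_lt_pow_right hP1 ?_
          nlinarith
      _ = P ^ (2*t*t+11*t+8) * P ^ ((t*t+5*t+1)*t) := pow_add P _ _
      _ ≤ P ^ (2*t*t+11*t+8) * ((t * P ^ (t*t+5*t+1)).choose t) :=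
          Nat.mul_le_mul_left _ hDc
  have hterm2 : P ^ (t*t+6*t+6) * (t * P ^ (t*t+5*t+1) - 1) * ((t * P ^ (t*t+5*t+1)).choose t)
      ≤ (t * P ^ (2*t*t+11*t+7)) * ((t * P ^ (t*t+5*t+1)).choose t) := by
    refine Nat.mul_le_mul_right _ ?_
    calc P ^ (t*t+6*t+6) * (t * P ^ (t*t+5*t+1) - 1)
        ≤ P ^ (t*t+6*t+6) * (t * P ^ (t*t+5*t+1)) :=
          Nat.mul_le_mul_left _ (Nat.sub_le _ _)
      _ = t * P ^ ((t*t+6*t+6) + (t*t+5*t+1)) := by rw [pow_add]; ring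
      _ = t * P ^ (2*t*t+11*t+7) := by congr 2; ring
  have hfin : (t * P ^ (2*t*t+11*t+7) + P ^ (2*t*t+11*t+8)) * ((t * P ^ (t*t+5*t+1)).choose t)
      = (t * P ^ (2*t*t+11*t+7)) * ((t * P ^ (t*t+5*t+1)).choose t)
        + P ^ (2*t*t+11*t+8) * ((t * P ^ (t*t+5*t+1)).choose t) := by ring
  omega

/-- block embedding -/
def blkEmb (M j : ℕ) (hj : j < 3) : Fin M ↪ Fin (3*M) :=
  ⟨fun k => ⟨j*M + (k:ℕ), by
      have hk := k.isLt
      have h2 : j*M ≤ 2*M := Nat.mul_le_mul_right M (by omega)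
      omega⟩,
   by
    intro a b h
    apply Fin.ext
    have h' := congrArg Fin.val h
    simp only [] at h'
    omega⟩

lemma blkEmb_val (M j : ℕ) (hj : j < 3) (k : Fin M) :
    ((blkEmb M j hj k : Fin (3*M)) : ℕ) = j*M + k := rfl

lemma exists_mono_box (q t P M : ℕ) (hq : 1 ≤ q) (ht : 1 ≤ t)
    (hPdef : P = 2*q*t) (hMdef : M = P ^ (t*t+6*t+6))
    (χ : Finset (Fin (3*M)) → Fin q) :
    ∃ (i : Fin q) (T B C : Finset (Fin (3*M))),
      T.card = t ∧ B.card = t ∧ C.card = t ∧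
      (∀ x ∈ T, (x:ℕ) < M) ∧
      (∀ y ∈ B, M ≤ (y:ℕ) ∧ (y:ℕ) < 2*M) ∧
      (∀ z ∈ C, 2*M ≤ (z:ℕ)) ∧
      (∀ x ∈ T, ∀ y ∈ B, ∀ z ∈ C, χ {x, y, z} = i) := by
  have hP : 2 ≤ P := by
    rw [hPdef, mul_assoc]
    have := Nat.mul_pos hq ht
    omega
  have htP : t ≤ P := by
    rw [hPdef]
    have h1 : 1*t ≤ (2*q)*t := Nat.mul_le_mul_right t (by omega)
    omega
  have hM1 : 1 ≤ M := by rw [hMdef]; exact Nat.one_le_pow _ _ (by omega)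
  -- blocks
  set Xs : Finset (Fin (3*M)) := Finset.univ.map (blkEmb M 0 (by omega)) with hXs
  set Ys : Finset (Fin (3*M)) := Finset.univ.map (blkEmb M 1 (by omega)) with hYs
  set Zs : Finset (Fin (3*M)) := Finset.univ.map (blkEmb M 2 (by omega)) with hZs
  have hXcard : Xs.card = M := by simp [hXs]
  have hYcard : Ys.card = M := by simp [hYs]
  have hZcard : Zs.card = M := by simp [hZs]
  have hXmem : ∀ x ∈ Xs, (x:ℕ) < M := by
    intro x hx
    obtain ⟨k, -, rfl⟩ := Finset.mem_map.mp hx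
    rw [blkEmb_val]
    have := k.isLt
    omega
  have hYmem : ∀ y ∈ Ys, M ≤ (y:ℕ) ∧ (y:ℕ) < 2*M := by
    intro y hy
    obtain ⟨k, -, rfl⟩ := Finset.mem_map.mp hy
    rw [blkEmb_val]
    have := k.isLt
    omega
  have hZmem : ∀ z ∈ Zs, 2*M ≤ (z:ℕ) := by
    intro z hz
    obtain ⟨k, -, rfl⟩ := Finset.mem_map.mp hz
    rw [blkEmb_val]
    omega
  -- pigeonhole on colors
  have hsum : ∑ i : Fin q, ∑ p ∈ Ys ×ˢ Zs, (Xs.filter fun x => χ {x, p.1, p.2} = i).card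
      = M*M*M := by
    rw [Finset.sum_comm]
    have hinner : ∀ p ∈ Ys ×ˢ Zs,
        ∑ i : Fin q, (Xs.filter fun x => χ {x, p.1, p.2} = i).card = M := by
      intro p _
      rw [← Finset.card_eq_sum_card_fiberwise (f := fun x => χ {x, p.1, p.2})
        (t := Finset.univ) (fun x _ => Finset.mem_univ _)]
      exact hXcard
    rw [Finset.sum_congr rfl hinner, Finset.sum_const, smul_eq_mul,
      Finset.card_product, hYcard, hZcard]
  have hqpos : 0 < q := hq
  have : Nonempty (Fin q) := ⟨⟨0, hqpos⟩⟩
  obtain ⟨i, -, hmax⟩ := Finset.exists_max_image Finset.univ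
    (fun i : Fin q => ∑ p ∈ Ys ×ˢ Zs, (Xs.filter fun x => χ {x, p.1, p.2} = i).card)
    ⟨⟨0, hqpos⟩, Finset.mem_univ _⟩
  have hpig : M*M*M ≤ q * ∑ p ∈ Ys ×ˢ Zs, (Xs.filter fun x => χ {x, p.1, p.2} = i).card := by
    calc M*M*M = ∑ j : Fin q, ∑ p ∈ Ys ×ˢ Zs,
          (Xs.filter fun x => χ {x, p.1, p.2} = j).card := hsum.symm
      _ ≤ ∑ _j : Fin q, ∑ p ∈ Ys ×ˢ Zs,
          (Xs.filter fun x => χ {x, p.1, p.2} = i).card :=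
          Finset.sum_le_sum fun j _ => hmax j (Finset.mem_univ _)
      _ = q * ∑ p ∈ Ys ×ˢ Zs, (Xs.filter fun x => χ {x, p.1, p.2} = i).card := by
          rw [Finset.sum_const, smul_eq_mul, Finset.card_univ, Fintype.card_fin]
  have he1 : 2*t*P^(3*t*t+18*t+17)
      ≤ ∑ p ∈ Ys ×ˢ Zs, (Xs.filter fun x => χ {x, p.1, p.2} = i).card := by
    have hMMM : M*M*M = q * (2*t*P^(3*t*t+18*t+17)) := by
      rw [hMdef, ← pow_add, ← pow_add]
      have hexp : (t*t+6*t+6) + (t*t+6*t+6) + (t*t+6*t+6) = (3*t*t+18*t+17) + 1 := by ring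
      rw [hexp, pow_succ, hPdef]
      ring
    refine Nat.le_of_mul_le_mul_left ?_ hqpos
    calc q * (2*t*P^(3*t*t+18*t+17)) = M*M*M := hMMM.symm
      _ ≤ q * _ := hpig
  -- first KST application
  obtain ⟨T, hTX, hTcard, hTs⟩ := kst Xs (Ys ×ˢ Zs)
    (fun p => Xs.filter fun x => χ {x, p.1, p.2} = i)
    (fun w _ => Finset.filter_subset _ _) t
    (t*P^(2*t*t+11*t+7) + P^(2*t*t+11*t+8)) (t*P^(t*t+6*t+5))
    (by
      rw [hXcard, Finset.card_product, hYcard, hZcard]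
      calc (t*P^(2*t*t+11*t+7) + P^(2*t*t+11*t+8) - 1) * (M.choose t) * M
            + (M*M) * (t*P^(t*t+6*t+5) - 1) * ((t*P^(t*t+6*t+5)).choose t)
          < (2*t*P^(3*t*t+18*t+17)) * ((t*P^(t*t+6*t+5)).choose t) := by
            rw [hMdef]
            exact arith1 P t ht htP hP
        _ ≤ (∑ p ∈ Ys ×ˢ Zs, (Xs.filter fun x => χ {x, p.1, p.2} = i).card)
            * ((t*P^(t*t+6*t+5)).choose t) := Nat.mul_le_mul_right _ he1)
  set W' := (Ys ×ˢ Zs).filter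
    (fun p => T ⊆ Xs.filter fun x => χ {x, p.1, p.2} = i) with hW'
  -- fibers of W' over Z
  have hW'sub : ∀ p ∈ W', p.1 ∈ Ys ∧ p.2 ∈ Zs := by
    intro p hp
    have := (Finset.mem_filter.mp hp).1
    exact Finset.mem_product.mp this
  have hsum2 : ∑ z ∈ Zs, (Ys.filter fun y => (y, z) ∈ W').card = W'.card := by
    rw [Finset.card_eq_sum_card_fiberwise (f := Prod.snd) (t := Zs)
      (fun p hp => (hW'sub p hp).2)]
    refine Finset.sum_congr rfl fun z hz => ?_
    refine Finset.card_nbij' (fun y => (y, z)) Prod.fst ?_ ?_ ?_ ?_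
    · intro y hy
      rw [Finset.mem_coe, Finset.mem_filter] at hy ⊢
      exact ⟨hy.2, rfl⟩
    · intro p hp
      rw [Finset.mem_coe, Finset.mem_filter] at hp ⊢
      refine ⟨(hW'sub p hp.1).1, ?_⟩
      have hpz : (p.1, z) = p := Prod.ext rfl hp.2.symm
      rw [hpz]
      exact hp.1
    · intro y _
      rfl
    · intro p hp
      rw [Finset.mem_coe, Finset.mem_filter] at hp
      exact Prod.ext rfl hp.2.symm
  -- second KST application
  obtain ⟨B, hBY, hBcard, hBs⟩ := kst Ys Zs
    (fun z => Ys.filter fun y => (y, z) ∈ W')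
    (fun z _ => Finset.filter_subset _ _) t t (t*P^(t*t+5*t+1))
    (by
      rw [hYcard, hZcard, hsum2]
      calc (t - 1) * (M.choose t) * M
            + M * (t*P^(t*t+5*t+1) - 1) * ((t*P^(t*t+5*t+1)).choose t)
          < (t*P^(2*t*t+11*t+7) + P^(2*t*t+11*t+8)) * ((t*P^(t*t+5*t+1)).choose t) := by
            rw [hMdef]
            exact arith2 P t ht htP hP
        _ ≤ W'.card * ((t*P^(t*t+5*t+1)).choose t) := Nat.mul_le_mul_right _ hTs)
  obtain ⟨C, hCsub, hCcard⟩ := Finset.exists_subset_card_eq hBs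
  refine ⟨i, T, B, C, hTcard, hBcard, hCcard, ?_, ?_, ?_, ?_⟩
  · exact fun x hx => hXmem x (hTX hx)
  · exact fun y hy => hYmem y (hBY hy)
  · intro z hz
    exact hZmem z (Finset.mem_of_mem_filter z (hCsub hz))
  · intro x hx y hy z hz
    have hzf := hCsub hz
    rw [Finset.mem_filter] at hzf
    have hyW : (y, z) ∈ W' := by
      have := hzf.2 hy
      exact (Finset.mem_filter.mp this).2
    have hT2 : T ⊆ Xs.filter fun x => χ {x, y, z} = i :=
      (Finset.mem_filter.mp hyW).2
    exact (Finset.mem_filter.mp (hT2 hx)).2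

/-- If `G` is a tripartite 3-uniform hypergraph, then there is a constant
`C = C(G)` such that `r(G; q) ≤ q ^ C` for all sufficiently large `q`. -/
theorem stmt1 (G : ThreeGraph) (hG : Tripartite G) :
    ∃ C : ℕ, ∃ q₀ : ℕ, ∀ q : ℕ, q₀ ≤ q → rq G q ≤ q ^ C := by
  classical
  obtain ⟨V1, V2, V3, h12, h13, h23, hunion, hedge⟩ := hG
  set t := G.verts.card + 1 with htdef
  have ht : 1 ≤ t := by omega
  refine ⟨2*(t*t+6*t+6)+1, 2*t+3, fun q hq => ?_⟩
  have hq1 : 1 ≤ q := by omega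
  set M := (2*q*t) ^ (t*t+6*t+6) with hMdef
  have hM1 : 1 ≤ M := Nat.one_le_pow _ _ (by positivity)
  have hNpos : 0 < 3*M := by omega
  -- part subsets
  have hV1sub : V1 ⊆ G.verts := by
    intro a ha; rw [← hunion]
    exact Finset.mem_union_left _ (Finset.mem_union_left _ ha)
  have hV2sub : V2 ⊆ G.verts := by
    intro a ha; rw [← hunion]
    exact Finset.mem_union_left _ (Finset.mem_union_right _ ha)
  have hV3sub : V3 ⊆ G.verts := by
    intro a ha; rw [← hunion]
    exact Finset.mem_union_right _ ha
  have hram : RamseyProp (fun _ : Fin q => G) (3*M) := by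
    intro χ
    obtain ⟨i, T, B, C, hTc, hBc, hCc, hTr, hBr, hCr, hcol⟩ :=
      exists_mono_box q t (2*q*t) M hq1 ht rfl hMdef χ
    refine ⟨i, ?_⟩
    -- embeddings of the parts
    have hcard1 : Fintype.card ↥V1 ≤ Fintype.card ↥T := by
      rw [Fintype.card_coe, Fintype.card_coe, hTc]
      have := Finset.card_le_card hV1sub
      omega
    have hcard2 : Fintype.card ↥V2 ≤ Fintype.card ↥B := by
      rw [Fintype.card_coe, Fintype.card_coe, hBc]
      have := Finset.card_le_card hV2sub
      omega
    have hcard3 : Fintype.card ↥V3 ≤ Fintype.card ↥C := by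
      rw [Fintype.card_coe, Fintype.card_coe, hCc]
      have := Finset.card_le_card hV3sub
      omega
    obtain ⟨g1⟩ := Function.Embedding.nonempty_of_card_le hcard1
    obtain ⟨g2⟩ := Function.Embedding.nonempty_of_card_le hcard2
    obtain ⟨g3⟩ := Function.Embedding.nonempty_of_card_le hcard3
    set f : ℕ → Fin (3*M) := fun x =>
      if h : x ∈ V1 then (g1 ⟨x, h⟩ : Fin (3*M))
      else if h : x ∈ V2 then (g2 ⟨x, h⟩ : Fin (3*M))
      else if h : x ∈ V3 then (g3 ⟨x, h⟩ : Fin (3*M))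
      else ⟨0, hNpos⟩ with hfdef
    have hf1 : ∀ x (h : x ∈ V1), f x = ↑(g1 ⟨x, h⟩) := by
      intro x h
      rw [hfdef]
      simp only [dif_pos h]
    have hf2 : ∀ x (h : x ∈ V2), f x = ↑(g2 ⟨x, h⟩) := by
      intro x h
      have h1 : x ∉ V1 := Finset.disjoint_right.mp h12 h
      rw [hfdef]
      simp only [dif_neg h1, dif_pos h]
    have hf3 : ∀ x (h : x ∈ V3), f x = ↑(g3 ⟨x, h⟩) := by
      intro x h
      have h1 : x ∉ V1 := Finset.disjoint_right.mp h13 h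
      have h2 : x ∉ V2 := Finset.disjoint_right.mp h23 h
      rw [hfdef]
      simp only [dif_neg h1, dif_neg h2, dif_pos h]
    have hm1 : ∀ x ∈ V1, f x ∈ T := by
      intro x h; rw [hf1 x h]; exact (g1 ⟨x, h⟩).2
    have hm2 : ∀ x ∈ V2, f x ∈ B := by
      intro x h; rw [hf2 x h]; exact (g2 ⟨x, h⟩).2
    have hm3 : ∀ x ∈ V3, f x ∈ C := by
      intro x h; rw [hf3 x h]; exact (g3 ⟨x, h⟩).2
    have hr1 : ∀ x ∈ V1, ((f x : Fin (3*M)) : ℕ) < M := fun x h => hTr _ (hm1 x h)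
    have hr2 : ∀ x ∈ V2, M ≤ ((f x : Fin (3*M)) : ℕ) ∧ ((f x : Fin (3*M)) : ℕ) < 2*M :=
      fun x h => hBr _ (hm2 x h)
    have hr3 : ∀ x ∈ V3, 2*M ≤ ((f x : Fin (3*M)) : ℕ) := fun x h => hCr _ (hm3 x h)
    -- injectivity
    have hinj : Set.InjOn f ↑G.verts := by
      intro a ha b hb hab
      have ha' : a ∈ V1 ∪ V2 ∪ V3 := by
        rw [hunion]; exact Finset.mem_coe.mp ha
      have hb' : b ∈ V1 ∪ V2 ∪ V3 := by
        rw [hunion]; exact Finset.mem_coe.mp hb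
      have hval : ((f a : Fin (3*M)) : ℕ) = ((f b : Fin (3*M)) : ℕ) := by rw [hab]
      rcases Finset.mem_union.mp ha' with ha2 | ha3
      · rcases Finset.mem_union.mp ha2 with ha1 | ha2'
        · rcases Finset.mem_union.mp hb' with hb2 | hb3
          · rcases Finset.mem_union.mp hb2 with hb1 | hb2'
            · rw [hf1 a ha1, hf1 b hb1] at hab
              have := g1.injective (Subtype.coe_injective hab)
              exact congrArg Subtype.val this
            · have := hr1 a ha1; have := hr2 b hb2'; omega
          · have := hr1 a ha1; have := hr3 b hb3; omega
        · rcases Finset.mem_union.mp hb' with hb2 | hb3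
          · rcases Finset.mem_union.mp hb2 with hb1 | hb2'
            · have := hr2 a ha2'; have := hr1 b hb1; omega
            · rw [hf2 a ha2', hf2 b hb2'] at hab
              have := g2.injective (Subtype.coe_injective hab)
              exact congrArg Subtype.val this
          · have := hr2 a ha2'; have := hr3 b hb3; omega
      · rcases Finset.mem_union.mp hb' with hb2 | hb3
        · rcases Finset.mem_union.mp hb2 with hb1 | hb2'
          · have := hr3 a ha3; have := hr1 b hb1; omega
          · have := hr3 a ha3; have := hr2 b hb2'; omega
        · rw [hf3 a ha3, hf3 b hb3] at hab
          have := g3.injective (Subtype.coe_injective hab)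
          exact congrArg Subtype.val this
    refine ⟨f, hinj, ?_⟩
    intro e he
    obtain ⟨he1, he2, he3⟩ := hedge e he
    obtain ⟨a, haeq⟩ := Finset.card_eq_one.mp he1
    obtain ⟨b, hbeq⟩ := Finset.card_eq_one.mp he2
    obtain ⟨c, hceq⟩ := Finset.card_eq_one.mp he3
    have haV : a ∈ e ∩ V1 := by rw [haeq]; exact Finset.mem_singleton_self a
    have hbV : b ∈ e ∩ V2 := by rw [hbeq]; exact Finset.mem_singleton_self b
    have hcV : c ∈ e ∩ V3 := by rw [hceq]; exact Finset.mem_singleton_self c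
    rw [Finset.mem_inter] at haV hbV hcV
    have hab : a ≠ b := fun h => Finset.disjoint_left.mp h12 haV.2 (h ▸ hbV.2)
    have hac : a ≠ c := fun h => Finset.disjoint_left.mp h13 haV.2 (h ▸ hcV.2)
    have hbc : b ≠ c := fun h => Finset.disjoint_left.mp h23 hbV.2 (h ▸ hcV.2)
    have hsub : ({a, b, c} : Finset ℕ) ⊆ e := by
      intro x hx
      rcases Finset.mem_insert.mp hx with rfl | hx'
      · exact haV.1
      rcases Finset.mem_insert.mp hx' with rfl | hx''
      · exact hbV.1
      · rw [Finset.mem_singleton.mp hx'']; exact hcV.1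
    have hcard3' : ({a, b, c} : Finset ℕ).card = 3 := by
      rw [Finset.card_insert_of_notMem (by simp [hab, hac]),
        Finset.card_insert_of_notMem (by simp [hbc]), Finset.card_singleton]
    have hecard := G.edge_card e he
    have heeq : ({a, b, c} : Finset ℕ) = e :=
      Finset.eq_of_subset_of_card_le hsub (by omega)
    rw [← heeq]
    have himg : ({a, b, c} : Finset ℕ).image f = {f a, f b, f c} := by
      simp [Finset.image_insert, Finset.image_singleton]
    rw [himg]
    exact hcol (f a) (hm1 a haV.2) (f b) (hm2 b hbV.2) (f c) (hm3 c hcV.2)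
  -- conclude the bound
  have hle : rq G q ≤ 3*M := Nat.sInf_le hram
  have hbound : 3*M ≤ q ^ (2*(t*t+6*t+6)+1) := by
    have h2t : 2*t ≤ q := by omega
    have h1 : 2*q*t ≤ q*q := by
      have : 2*q*t = (2*t)*q := by ring
      rw [this]
      exact Nat.mul_le_mul_right q h2t
    calc 3*M ≤ q * ((q*q) ^ (t*t+6*t+6)) := by
          rw [hMdef]
          exact Nat.mul_le_mul (by omega) (Nat.pow_le_pow_left h1 _)
      _ = q ^ (2*(t*t+6*t+6)+1) := by
          rw [← sq, ← pow_mul, pow_succ]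
          ring
  exact le_trans hle hbound
end

section
/- For every ℓ ≥ 1 and every 3-graph G ∈ U_ℓ, there is a constant C = C(G) such that r(G;q) ≤ 2^{C q^ℓ log q} for all q ≥ 2. -/
open Finset

section Dev

variable {N q : ℕ}

/-- A monochromatic copy of `A` in color `i` with image inside `S`. -/
def CopyIn (χ : Finset (Fin N) → Fin q) (S : Finset (Fin N)) (i : Fin q) (A : ThreeGraph) : Prop :=
  ∃ f : ℕ → Fin N, Set.InjOn f ↑A.verts ∧ (∀ a ∈ A.verts, f a ∈ S) ∧
    ∀ e ∈ A.edges, χ (e.image f) = i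

lemma CopyIn.mono {χ : Finset (Fin N) → Fin q} {S T : Finset (Fin N)} {i : Fin q}
    {A : ThreeGraph} (h : CopyIn χ S i A) (hST : S ⊆ T) : CopyIn χ T i A := by
  obtain ⟨f, h1, h2, h3⟩ := h
  exact ⟨f, h1, fun a ha => hST (h2 a ha), h3⟩

/-- Pivot-chase for multicolour graph Ramsey. -/
lemma GR_aux (hq : 1 ≤ q) (c : Finset (Fin N) → Fin q) :
    ∀ (t : ℕ) (S : Finset (Fin N)), (2*q)^t ≤ S.card →
    ∃ (P : Finset (Fin N)) (d : Fin N → Fin q), P ⊆ S ∧ P.card = t ∧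
      ∀ x ∈ P, ∀ y ∈ P, x < y → c {x, y} = d x := by
  intro t
  induction t with
  | zero =>
    intro S _
    exact ⟨∅, fun _ => ⟨0, hq⟩, by simp, by simp, by simp⟩
  | succ t ih =>
    intro S hS
    have hSpos : 0 < S.card := lt_of_lt_of_le (Nat.pow_pos (by omega)) hS
    have hSne : S.Nonempty := Finset.card_pos.mp hSpos
    set v := S.min' hSne with hv
    have hvS : v ∈ S := S.min'_mem hSne
    have hcard : (Finset.univ : Finset (Fin q)).card * (2*q)^t ≤ (S.erase v).card := by
      rw [Finset.card_erase_of_mem hvS, Finset.card_univ, Fintype.card_fin]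
      have h1 : (2*q)^(t+1) = q * (2*q)^t + q * (2*q)^t := by ring
      have h2 : 1 ≤ q * (2*q)^t := Nat.one_le_iff_ne_zero.mpr (by positivity)
      omega
    have huniv : (Finset.univ : Finset (Fin q)).Nonempty := ⟨⟨0, hq⟩, Finset.mem_univ _⟩
    obtain ⟨j, _, hj⟩ := Finset.exists_le_card_fiber_of_mul_le_card_of_maps_to
      (f := fun y => c {v, y}) (fun a _ => Finset.mem_univ _) huniv hcard
    set S' := (S.erase v).filter (fun y => c {v, y} = j) with hS'
    obtain ⟨P, d, hPsub, hPcard, hP⟩ := ih S' hj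
    have hvP : v ∉ P := by
      intro hvP
      have := hPsub hvP
      rw [hS', Finset.mem_filter] at this
      exact (Finset.ne_of_mem_erase this.1) rfl
    refine ⟨insert v P, Function.update d v j, ?_, ?_, ?_⟩
    · intro x hx
      rcases Finset.mem_insert.mp hx with h | h
      · exact h ▸ hvS
      · exact (Finset.mem_erase.mp (Finset.mem_filter.mp (hPsub h)).1).2
    · rw [Finset.card_insert_of_notMem hvP, hPcard]
    · intro x hx y hy hxy
      rcases Finset.mem_insert.mp hx with h | h
      · subst h
        have hyP : y ∈ P := by
          rcases Finset.mem_insert.mp hy with h' | h'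
          · exact absurd h' (by intro h''; subst h''; exact lt_irrefl _ hxy)
          · exact h'
        have := (Finset.mem_filter.mp (hPsub hyP)).2
        rw [Function.update_self]
        exact this
      · have hxv : x ≠ v := by
          intro h'; subst h'; exact hvP h
        rw [Function.update_of_ne hxv]
        have hyP : y ∈ P := by
          rcases Finset.mem_insert.mp hy with h' | h'
          · exfalso
            subst h'
            have hxS : x ∈ S := (Finset.mem_erase.mp (Finset.mem_filter.mp (hPsub h)).1).2
            exact absurd (S.min'_le x hxS) (not_le.mpr hxy)
          · exact h'
        exact hP x h y hyP hxy

/-- Multicolour graph Ramsey: a monochromatic `m`-clique. -/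
lemma GR (hq : 1 ≤ q) (m : ℕ) (c : Finset (Fin N) → Fin q) (S : Finset (Fin N))
    (hS : (2*q)^(q*m) ≤ S.card) :
    ∃ (i : Fin q) (T : Finset (Fin N)), T ⊆ S ∧ T.card = m ∧
      ∀ x ∈ T, ∀ y ∈ T, x ≠ y → c {x, y} = i := by
  obtain ⟨P, d, hPS, hPcard, hP⟩ := GR_aux hq c (q*m) S hS
  have huniv : (Finset.univ : Finset (Fin q)).Nonempty := ⟨⟨0, hq⟩, Finset.mem_univ _⟩
  have hcard : (Finset.univ : Finset (Fin q)).card * m ≤ P.card := by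
    rw [Finset.card_univ, Fintype.card_fin, hPcard]
  obtain ⟨i, _, hi⟩ := Finset.exists_le_card_fiber_of_mul_le_card_of_maps_to
    (f := fun x => d x) (fun a _ => Finset.mem_univ _) huniv hcard
  obtain ⟨T, hT, hTcard⟩ := Finset.exists_subset_card_eq hi
  refine ⟨i, T, ?_, hTcard, ?_⟩
  · exact fun x hx => hPS (Finset.mem_filter.mp (hT hx)).1
  · intro x hx y hy hxy
    have hxP : x ∈ P := (Finset.mem_filter.mp (hT hx)).1
    have hyP : y ∈ P := (Finset.mem_filter.mp (hT hy)).1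
    have hdx : d x = i := (Finset.mem_filter.mp (hT hx)).2
    have hdy : d y = i := (Finset.mem_filter.mp (hT hy)).2
    rcases lt_or_gt_of_ne hxy with h | h
    · rw [hP x hxP y hyP h, hdx]
    · rw [Finset.pair_comm, hP y hyP x hxP h, hdy]

end Dev
section Dev2

variable {N q : ℕ}

lemma exists_injOn_into (hN : 0 < N) (a : Finset ℕ) (b : Finset (Fin N)) (h : a.card ≤ b.card) :
    ∃ f : ℕ → Fin N, Set.InjOn f ↑a ∧ ∀ x ∈ a, f x ∈ b := by
  obtain ⟨b', hb'sub, hb'card⟩ := Finset.exists_subset_card_eq h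
  have hcard : a.card = b'.card := hb'card.symm
  let e := Finset.equivOfCardEq hcard
  refine ⟨fun x => if hx : x ∈ a then (e ⟨x, hx⟩ : Fin N) else ⟨0, hN⟩, ?_, ?_⟩
  · intro x hx y hy hxy
    simp only [Finset.mem_coe] at hx hy
    simp only [dif_pos hx, dif_pos hy] at hxy
    have := e.injective (Subtype.ext hxy)
    exact congrArg Subtype.val this
  · intro x hx
    simp only [dif_pos hx]
    exact hb'sub (e ⟨x, hx⟩).2

lemma base_arith (hq : 1 ≤ q) (s : ℕ) (hs : 1 ≤ s) :
    (2*q)^(q*s) + s * (q * ((2*q)^(q*s))^s) ≤ (2*q)^(q*s*s + q*s + s + 2) := by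
  have hb : 2 ≤ 2*q := by omega
  have hb1 : 1 ≤ 2*q := by omega
  have h1 : s * (q * ((2*q)^(q*s))^s) ≤ (2*q)^(q*s*s + s + 1) := by
    have hs2 : s ≤ (2*q)^s :=
      le_trans (le_of_lt (Nat.lt_two_pow_self (n := s))) (Nat.pow_le_pow_left hb s)
    have hq2 : q ≤ (2*q)^1 := by rw [pow_one]; omega
    calc s * (q * ((2*q)^(q*s))^s) = s * q * (2*q)^(q*s*s) := by
          rw [← pow_mul]; ring
      _ ≤ (2*q)^s * (2*q)^1 * (2*q)^(q*s*s) := by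
          apply Nat.mul_le_mul_right
          exact Nat.mul_le_mul hs2 hq2
      _ = (2*q)^(q*s*s + s + 1) := by rw [← pow_add, ← pow_add]; ring_nf
  have h2 : (2*q)^(q*s) ≤ (2*q)^(q*s*s + s + 1) := by
    apply Nat.pow_le_pow_right hb1
    have : q*s*1 ≤ q*s*s := Nat.mul_le_mul_left _ hs
    omega
  calc (2*q)^(q*s) + s * (q * ((2*q)^(q*s))^s) ≤ 2 * (2*q)^(q*s*s + s + 1) := by omega
    _ ≤ (2*q) * (2*q)^(q*s*s + s + 1) := Nat.mul_le_mul_right _ hb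
    _ = (2*q)^(q*s*s + s + 2) := by rw [← pow_succ']
    _ ≤ (2*q)^(q*s*s + q*s + s + 2) := Nat.pow_le_pow_right hb1 (by omega)

lemma base_case (hq : 1 ≤ q) (s : ℕ) (hs : 1 ≤ s)
    (A : Fin q → ThreeGraph) (W : Fin q → Finset ℕ)
    (hWsub : ∀ i, W i ⊆ (A i).verts)
    (hWcc : ∀ i, ∀ e ∈ (A i).edges, (e ∩ W i).card = 1)
    (hsize : ∀ i, (A i).verts.card ≤ s)
    (χ : Finset (Fin N) → Fin q) (S : Finset (Fin N))
    (hS : (2*q)^(q*s*s + q*s + s + 2) ≤ S.card) :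
    ∃ i, CopyIn χ S i (A i) := by
  have hb1 : 1 ≤ 2*q := by omega
  have hN : 0 < N := by
    have h1 : 0 < S.card := lt_of_lt_of_le (Nat.pow_pos (by omega)) hS
    have h2 := Finset.card_le_univ S
    rw [Fintype.card_fin] at h2
    omega
  set M := (2*q)^(q*s) with hM
  have hMle : M ≤ S.card := by
    refine le_trans (Nat.pow_le_pow_right hb1 ?_) hS
    omega
  obtain ⟨Y, hYS, hYcard⟩ := Finset.exists_subset_card_eq hMle
  set Z := S \ Y with hZdef
  have hGRf : ∃ g : Fin N → Fin q × Finset (Fin N), ∀ z ∈ Z, (g z).2 ⊆ Y ∧ (g z).2.card = s ∧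
      (∀ x ∈ (g z).2, ∀ y ∈ (g z).2, x ≠ y → χ (insert z {x, y}) = (g z).1) := by
    have hGR : ∀ z ∈ Z, ∃ p : Fin q × Finset (Fin N), p.2 ⊆ Y ∧ p.2.card = s ∧
        (∀ x ∈ p.2, ∀ y ∈ p.2, x ≠ y → χ (insert z {x, y}) = p.1) := by
      intro z _
      obtain ⟨i, T, h1, h2, h3⟩ := GR hq s (fun p => χ (insert z p)) Y (by rw [hYcard])
      exact ⟨(i, T), h1, h2, h3⟩
    choose g hg using hGR
    exact ⟨fun z => if h : z ∈ Z then g z h else (⟨0, hq⟩, ∅), fun z hz => by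
      simp only [dif_pos hz]; exact hg z hz⟩
  obtain ⟨g, hg⟩ := hGRf
  set C := (Finset.univ : Finset (Fin q)) ×ˢ (Y.powersetCard s) with hCdef
  have hmaps : ∀ z ∈ Z, g z ∈ C := fun z hz => by
    rw [hCdef, Finset.mem_product]
    exact ⟨Finset.mem_univ _, Finset.mem_powersetCard.mpr ⟨(hg z hz).1, (hg z hz).2.1⟩⟩
  have hsM : s ≤ M := by
    calc s ≤ 2^s := le_of_lt (Nat.lt_two_pow_self (n := s))
      _ ≤ (2*q)^s := Nat.pow_le_pow_left (by omega) s
      _ ≤ (2*q)^(q*s) := Nat.pow_le_pow_right hb1 (by nlinarith)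
  have hCne : C.Nonempty := by
    obtain ⟨X0, h1, h2⟩ := Finset.exists_subset_card_eq (le_trans hsM hYcard.symm.le)
    exact ⟨(⟨0, hq⟩, X0), by
      rw [hCdef, Finset.mem_product]
      exact ⟨Finset.mem_univ _, Finset.mem_powersetCard.mpr ⟨h1, h2⟩⟩⟩
  have hCcard : C.card * s ≤ Z.card := by
    have hZcard : Z.card = S.card - M := by rw [hZdef, Finset.card_sdiff_of_subset hYS, hYcard]
    have h1 : C.card ≤ q * M^s := by
      rw [hCdef, Finset.card_product, Finset.card_univ, Fintype.card_fin,
        Finset.card_powersetCard, hYcard]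
      exact Nat.mul_le_mul_left q (Nat.choose_le_pow M s)
    have h2 := base_arith hq s hs
    rw [← hM] at h2
    calc C.card * s ≤ (q * M^s) * s := Nat.mul_le_mul_right s h1
      _ = s * (q * M^s) := by ring
      _ ≤ S.card - M := by omega
      _ = Z.card := hZcard.symm
  obtain ⟨⟨i, X⟩, hiX, hfiber⟩ :=
    Finset.exists_le_card_fiber_of_mul_le_card_of_maps_to hmaps hCne hCcard
  have hXsub : X ⊆ Y ∧ X.card = s := by
    rw [hCdef, Finset.mem_product] at hiX
    have := Finset.mem_powersetCard.mp hiX.2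
    exact this
  -- the fiber
  set Fib := Z.filter (fun z => g z = (i, X)) with hFib
  have hwle : (W i).card ≤ s := le_trans (Finset.card_le_card (hWsub i)) (hsize i)
  obtain ⟨Z', hZ'sub, hZ'card⟩ := Finset.exists_subset_card_eq (le_trans hwle hfiber)
  -- injections
  obtain ⟨fW, hfWinj, hfWmem⟩ := exists_injOn_into hN (W i) Z' (by rw [hZ'card])
  have hRcard : ((A i).verts \ W i).card ≤ X.card := by
    rw [hXsub.2]
    calc ((A i).verts \ W i).card ≤ (A i).verts.card := Finset.card_le_card (Finset.sdiff_subset)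
      _ ≤ s := hsize i
  obtain ⟨fR, hfRinj, hfRmem⟩ := exists_injOn_into hN ((A i).verts \ W i) X hRcard
  refine ⟨i, fun a => if a ∈ W i then fW a else fR a, ?_, ?_, ?_⟩
  · -- InjOn
    intro x hx y hy hxy
    simp only [Finset.mem_coe] at hx hy
    by_cases hxW : x ∈ W i <;> by_cases hyW : y ∈ W i
    · simp only [if_pos hxW, if_pos hyW] at hxy
      exact hfWinj hxW hyW hxy
    · simp only [if_pos hxW, if_neg hyW] at hxy
      exfalso
      have h1 : fW x ∈ Z' := hfWmem x hxW
      have h2 : fR y ∈ X := hfRmem y (Finset.mem_sdiff.mpr ⟨hy, hyW⟩)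
      have h3 : fW x ∈ Z := Finset.mem_of_mem_filter _ (hZ'sub h1)
      have h4 : fR y ∈ Y := hXsub.1 h2
      rw [hZdef, Finset.mem_sdiff] at h3
      exact h3.2 (hxy ▸ h4)
    · simp only [if_neg hxW, if_pos hyW] at hxy
      exfalso
      have h1 : fW y ∈ Z' := hfWmem y hyW
      have h2 : fR x ∈ X := hfRmem x (Finset.mem_sdiff.mpr ⟨hx, hxW⟩)
      have h3 : fW y ∈ Z := Finset.mem_of_mem_filter _ (hZ'sub h1)
      have h4 : fR x ∈ Y := hXsub.1 h2
      rw [hZdef, Finset.mem_sdiff] at h3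
      exact h3.2 (hxy ▸ h4)
    · simp only [if_neg hxW, if_neg hyW] at hxy
      exact hfRinj (Finset.mem_sdiff.mpr ⟨hx, hxW⟩) (Finset.mem_sdiff.mpr ⟨hy, hyW⟩) hxy
  · -- maps into S
    intro a ha
    by_cases haW : a ∈ W i
    · simp only [if_pos haW]
      have h1 : fW a ∈ Z := Finset.mem_of_mem_filter _ (hZ'sub (hfWmem a haW))
      rw [hZdef, Finset.mem_sdiff] at h1
      exact h1.1
    · simp only [if_neg haW]
      exact hYS (hXsub.1 (hfRmem a (Finset.mem_sdiff.mpr ⟨ha, haW⟩)))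
  · -- edges
    intro e he
    have hecard : e.card = 3 := (A i).edge_card e he
    have hesub : e ⊆ (A i).verts := (A i).edge_sub e he
    have hcap : (e ∩ W i).card = 1 := hWcc i e he
    obtain ⟨u, hu⟩ := Finset.card_eq_one.mp hcap
    have hdiff : (e \ W i).card = 2 := by
      have h1 : (e ∩ W i).card + (e \ W i).card = e.card := by
        rw [Finset.card_inter_add_card_sdiff]
      omega
    obtain ⟨x, y, hxy, hxyeq⟩ := Finset.card_eq_two.mp hdiff
    have huW : u ∈ W i := by
      have : u ∈ e ∩ W i := hu ▸ Finset.mem_singleton_self u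
      exact (Finset.mem_inter.mp this).2
    have hue : u ∈ e := by
      have : u ∈ e ∩ W i := hu ▸ Finset.mem_singleton_self u
      exact (Finset.mem_inter.mp this).1
    have hxe : x ∈ e ∧ x ∉ W i := by
      have : x ∈ e \ W i := hxyeq ▸ Finset.mem_insert_self x {y}
      exact Finset.mem_sdiff.mp this
    have hye : y ∈ e ∧ y ∉ W i := by
      have : y ∈ e \ W i := hxyeq ▸ Finset.mem_insert.mpr (Or.inr (Finset.mem_singleton_self y))
      exact Finset.mem_sdiff.mp this
    have heeq : e = insert u {x, y} := by
      apply Finset.eq_of_subset_of_card_le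
      · intro a ha
        by_cases haW : a ∈ W i
        · have : a ∈ e ∩ W i := Finset.mem_inter.mpr ⟨ha, haW⟩
          rw [hu, Finset.mem_singleton] at this
          rw [this]
          exact Finset.mem_insert_self _ _
        · have : a ∈ e \ W i := Finset.mem_sdiff.mpr ⟨ha, haW⟩
          rw [hxyeq] at this
          exact Finset.mem_insert.mpr (Or.inr this)
      · rw [hecard]
        exact le_trans (Finset.card_insert_le u {x, y}) (by
          have := Finset.card_insert_le x ({y} : Finset ℕ)
          simp only [Finset.card_singleton] at this ⊢
          omega)
    -- compute image
    have hz' : fW u ∈ Fib := hZ'sub (hfWmem u huW)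
    have hgz : g (fW u) = (i, X) := (Finset.mem_filter.mp hz').2
    have hzZ : fW u ∈ Z := Finset.mem_of_mem_filter _ hz'
    have hxX : fR x ∈ X := hfRmem x (Finset.mem_sdiff.mpr ⟨hesub hxe.1, hxe.2⟩)
    have hyX : fR y ∈ X := hfRmem y (Finset.mem_sdiff.mpr ⟨hesub hye.1, hye.2⟩)
    have hfRxy : fR x ≠ fR y := fun hcon =>
      hxy (hfRinj (Finset.mem_sdiff.mpr ⟨hesub hxe.1, hxe.2⟩)
        (Finset.mem_sdiff.mpr ⟨hesub hye.1, hye.2⟩) hcon)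
    have hmono := (hg (fW u) hzZ).2.2
    rw [hgz] at hmono
    have := hmono (fR x) hxX (fR y) hyX hfRxy
    have himg : e.image (fun a => if a ∈ W i then fW a else fR a) = insert (fW u) {fR x, fR y} := by
      rw [heeq, Finset.image_insert, Finset.image_insert, Finset.image_singleton]
      simp only [if_pos huW, if_neg hxe.2, if_neg hye.2]
    rw [himg]
    exact this

end Dev2
section Dev3

variable {N q : ℕ}

lemma card_subsets_containing (S P : Finset (Fin N)) (R : ℕ) (hP : P ⊆ S) :
    ((S.powersetCard R).filter (fun T => P ⊆ T)).card ≤ (S.card - P.card).choose (R - P.card) := by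
  have hinj : Set.InjOn (fun T => T \ P)
      ↑((S.powersetCard R).filter (fun T => P ⊆ T)) := by
    intro T1 h1 T2 h2 h12
    simp only [Finset.coe_filter, Set.mem_setOf_eq] at h1 h2
    have e1 : T1 \ P ∪ P = T1 := Finset.sdiff_union_of_subset h1.2
    have e2 : T2 \ P ∪ P = T2 := Finset.sdiff_union_of_subset h2.2
    rw [← e1, ← e2]
    simp only at h12
    rw [h12]
  have hmaps : ∀ T ∈ (S.powersetCard R).filter (fun T => P ⊆ T),
      T \ P ∈ (S \ P).powersetCard (R - P.card) := by
    intro T hT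
    rw [Finset.mem_filter] at hT
    obtain ⟨hTS, hTcard⟩ := Finset.mem_powersetCard.mp hT.1
    refine Finset.mem_powersetCard.mpr ⟨?_, ?_⟩
    · exact Finset.sdiff_subset_sdiff hTS (le_refl P)
    · rw [Finset.card_sdiff_of_subset hT.2, hTcard]
  calc ((S.powersetCard R).filter (fun T => P ⊆ T)).card
      ≤ ((S \ P).powersetCard (R - P.card)).card :=
        Finset.card_le_card_of_injOn _ hmaps hinj
    _ = (S.card - P.card).choose (R - P.card) := by
        rw [Finset.card_powersetCard, Finset.card_sdiff_of_subset hP]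

lemma extract_arith (hq : 1 ≤ q) (s' R K n : ℕ)
    (hR2 : 2^(s'+3) ≤ R)
    (hn : 2*q*(K + (s'+1)) * R^(s'+2) ≤ n) :
    q * n^s' * K * R^(s'+1) ≤ (n + 1 - (s'+1))^(s'+1) := by
  have hRpos : 1 ≤ R := le_trans Nat.one_le_two_pow hR2
  have h4 : 4 ≤ R := by
    refine le_trans ?_ hR2
    calc 4 = 2^2 := by norm_num
      _ ≤ 2^(s'+3) := Nat.pow_le_pow_right (by omega) (by omega)
  have hnt : 2*(s'+1) ≤ n := by
    have h2 : R ≤ R^(s'+2) := Nat.le_self_pow (by omega) R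
    have h5 : 2*1*(0 + (s'+1)) * R ≤ 2*q*(K + (s'+1)) * R^(s'+2) := by
      apply Nat.mul_le_mul _ h2
      apply Nat.mul_le_mul _ (by omega)
      omega
    have h7 : 2*(s'+1)*R ≤ n := by
      refine le_trans ?_ (le_trans h5 hn)
      apply Nat.le_of_eq
      ring
    have h8 : 2*(s'+1)*1 ≤ 2*(s'+1)*R := Nat.mul_le_mul_left _ (by omega)
    omega
  have hhalf : n ≤ 2 * (n + 1 - (s'+1)) := by omega
  have key : 2^(s'+1) * (q * n^s' * K * R^(s'+1)) ≤ n^(s'+1) := by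
    have h1 : n^(s'+1) = n^s' * n := by rw [pow_succ]
    have h2 : 2^(s'+1) * (q * K * R^(s'+1)) * 4 ≤ 2*q*(K + (s'+1)) * R^(s'+2) := by
      have e1 : R^(s'+2) = R * R^(s'+1) := by rw [pow_succ (n := s'+1)]; ring
      have e2 : 2^((s'+1)+2) ≤ R := by
        calc 2^((s'+1)+2) = 2^(s'+3) := by rw [show (s'+1)+2 = s'+3 from by omega]
          _ ≤ R := hR2
      calc 2^(s'+1) * (q * K * R^(s'+1)) * 4 = (2^((s'+1)+2)) * (q * K * R^(s'+1)) := by ring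
        _ ≤ R * (q * K * R^(s'+1)) := Nat.mul_le_mul_right _ e2
        _ = q * K * (R * R^(s'+1)) := by ring
        _ ≤ q * (K + (s'+1)) * (R * R^(s'+1)) := by
            apply Nat.mul_le_mul_right
            apply Nat.mul_le_mul_left
            omega
        _ ≤ 2*q*(K + (s'+1)) * (R * R^(s'+1)) := by
            apply Nat.mul_le_mul_right
            exact Nat.mul_le_mul_right _ (by omega)
        _ = 2*q*(K + (s'+1)) * R^(s'+2) := by rw [e1]
    calc 2^(s'+1) * (q * n^s' * K * R^(s'+1)) = n^s' * (2^(s'+1) * (q * K * R^(s'+1))) := by ring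
      _ ≤ n^s' * n := by
          apply Nat.mul_le_mul_left
          calc 2^(s'+1) * (q * K * R^(s'+1)) ≤ 2^(s'+1) * (q * K * R^(s'+1)) * 4 := by omega
            _ ≤ 2*q*(K + (s'+1)) * R^(s'+2) := h2
            _ ≤ n := hn
      _ = n^(s'+1) := h1.symm
  have hfin : 2^(s'+1) * (q * n^s' * K * R^(s'+1)) ≤ 2^(s'+1) * (n + 1 - (s'+1))^(s'+1) := by
    calc 2^(s'+1) * (q * n^s' * K * R^(s'+1)) ≤ n^(s'+1) := key
      _ ≤ (2 * (n + 1 - (s'+1)))^(s'+1) := Nat.pow_le_pow_left hhalf (s'+1)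
      _ = 2^(s'+1) * (n + 1 - (s'+1))^(s'+1) := by rw [Nat.mul_pow]
  have hres := Nat.le_of_mul_le_mul_left hfin (Nat.pow_pos (n := s'+1) (by omega))
  exact hres

lemma extract (hq : 1 ≤ q) (s' R K : ℕ)
    (S : Finset (Fin N))
    (hR1 : s' + 1 ≤ R) (hR2 : 2^(s'+3) ≤ R)
    (hn : 2*q*(K + (s'+1)) * R^(s'+2) ≤ S.card)
    (k : Fin q → Fin (s'+1))
    (Q : Fin q → (Fin (s'+1) → Fin N) → Prop)
    (hyp : ∀ T ∈ S.powersetCard R, ∃ (i : Fin q) (e : Fin (s'+1) → Fin N),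
        Function.Injective e ∧ (∀ j, e j ∈ T) ∧ Q i e) :
    ∃ (i : Fin q) (e₀ : Fin (s'+1) → Fin N) (B : Finset (Fin N)),
      K ≤ B.card ∧ B ⊆ S ∧
      (∀ b ∈ B, Function.Injective (Function.update e₀ (k i) b) ∧
        (∀ j, Function.update e₀ (k i) b j ∈ S) ∧ Q i (Function.update e₀ (k i) b)) := by
  have hposprod : 0 < 2*q*(K + (s'+1)) * R^(s'+2) := by
    apply Nat.mul_pos
    · exact Nat.mul_pos (by omega) (by omega)
    · exact Nat.pow_pos (by omega)
  have hN : 0 < N := by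
    have h2 := Finset.card_le_univ S
    rw [Fintype.card_fin] at h2
    omega
  have hSne : S.Nonempty := by
    apply Finset.card_pos.mp
    omega
  rcases Nat.eq_zero_or_pos K with hK0 | hKpos
  · exact ⟨⟨0, hq⟩, fun _ => ⟨0, hN⟩, ∅, by simp [hK0], Finset.empty_subset _, by simp⟩
  set n := S.card with hndef
  have hRn : R ≤ n := by
    calc R ≤ R^(s'+2) := Nat.le_self_pow (by omega) R
      _ ≤ 2*q*(K + (s'+1)) * R^(s'+2) :=
          Nat.le_mul_of_pos_left _ (Nat.mul_pos (by omega) (by omega))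
      _ ≤ n := hn
  -- choice of copy data for each R-subset
  have hdatex : ∃ dat : Finset (Fin N) → Fin q × (Fin (s'+1) → Fin N),
      ∀ T ∈ S.powersetCard R, Function.Injective (dat T).2 ∧ (∀ j, (dat T).2 j ∈ T) ∧
        Q (dat T).1 (dat T).2 := by
    refine ⟨fun T => if h : T ∈ S.powersetCard R
      then ((hyp T h).choose, (hyp T h).choose_spec.choose)
      else (⟨0, hq⟩, fun _ => ⟨0, hN⟩), fun T hT => ?_⟩
    have hspec := (hyp T hT).choose_spec.choose_spec
    simp only [dif_pos hT]
    exact hspec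
  obtain ⟨dat, hdat⟩ := hdatex
  set Ω := S.powersetCard R with hΩ
  set D := Ω.image dat with hD
  have hDprops : ∀ d ∈ D, Function.Injective d.2 ∧ (∀ j, d.2 j ∈ S) ∧ Q d.1 d.2 := by
    intro d hd
    obtain ⟨T₀, hT₀, hT₀d⟩ := Finset.mem_image.mp hd
    obtain ⟨p1, p2, p3⟩ := hdat T₀ hT₀
    rw [hT₀d] at p1 p2 p3
    have hT₀S : T₀ ⊆ S := (Finset.mem_powersetCard.mp hT₀).1
    exact ⟨p1, fun j => hT₀S (p2 j), p3⟩
  -- fiber bound for dat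
  have hfib : ∀ d ∈ D, (Ω.filter (fun T => dat T = d)).card ≤ (n - (s'+1)).choose (R - (s'+1)) := by
    intro d hd
    have hinj : Function.Injective d.2 := (hDprops d hd).1
    set P := (Finset.univ : Finset (Fin (s'+1))).image d.2 with hP
    have hPcard : P.card = (s'+1) := by
      rw [hP, Finset.card_image_of_injective _ hinj, Finset.card_univ, Fintype.card_fin]
    have hPS : P ⊆ S := by
      intro x hx
      obtain ⟨j, _, rfl⟩ := Finset.mem_image.mp hx
      exact (hDprops d hd).2.1 j
    have hsubset : Ω.filter (fun T => dat T = d) ⊆ Ω.filter (fun T => P ⊆ T) := by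
      intro T hT
      rw [Finset.mem_filter] at hT ⊢
      refine ⟨hT.1, ?_⟩
      intro x hx
      obtain ⟨j, _, rfl⟩ := Finset.mem_image.mp hx
      have := (hdat T hT.1).2.1 j
      rw [hT.2] at this
      exact this
    calc (Ω.filter (fun T => dat T = d)).card ≤ (Ω.filter (fun T => P ⊆ T)).card :=
          Finset.card_le_card hsubset
      _ ≤ (S.card - P.card).choose (R - P.card) := card_subsets_containing S P R hPS
      _ = (n - (s'+1)).choose (R - (s'+1)) := by rw [hPcard, hndef]
  have hcount : n.choose R ≤ (n - (s'+1)).choose (R - (s'+1)) * D.card := by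
    have h := Finset.card_le_mul_card_image Ω ((n-(s'+1)).choose (R-(s'+1)))
      (fun d hd => hfib d hd)
    rw [hΩ, Finset.card_powersetCard] at h
    exact h
  have hid : n.choose R * R.choose (s'+1) = n.choose (s'+1) * (n - (s'+1)).choose (R - (s'+1)) :=
    Nat.choose_mul hR1
  have hcancel : n.choose (s'+1) ≤ D.card * R.choose (s'+1) := by
    have hpos : 0 < (n - (s'+1)).choose (R - (s'+1)) := Nat.choose_pos (by omega)
    have h1 : n.choose (s'+1) * (n-(s'+1)).choose (R-(s'+1)) ≤ (D.card * R.choose (s'+1)) * (n-(s'+1)).choose (R-(s'+1)) := by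
      calc n.choose (s'+1) * (n-(s'+1)).choose (R-(s'+1)) = n.choose R * R.choose (s'+1) := hid.symm
        _ ≤ ((n-(s'+1)).choose (R-(s'+1)) * D.card) * R.choose (s'+1) :=
            Nat.mul_le_mul_right _ hcount
        _ = (D.card * R.choose (s'+1)) * (n-(s'+1)).choose (R-(s'+1)) := by ring
    exact Nat.le_of_mul_le_mul_right h1 hpos
  -- class map and pigeonhole
  set ψ : (Fin q × (Fin (s'+1) → Fin N)) → Fin q × (Fin s' → Fin N) :=
    fun d => (d.1, fun jj => d.2 ((k d.1).succAbove jj)) with hψ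
  set Cls := (Finset.univ : Finset (Fin q)) ×ˢ Fintype.piFinset (fun _ : Fin s' => S) with hCls
  have hClscard : Cls.card = q * n^s' := by
    rw [hCls, Finset.card_product, Finset.card_univ, Fintype.card_fin, Fintype.card_piFinset]
    simp [hndef]
  have hmaps : ∀ d ∈ D, ψ d ∈ Cls := by
    intro d hd
    rw [hCls, Finset.mem_product]
    refine ⟨Finset.mem_univ _, ?_⟩
    rw [Fintype.mem_piFinset]
    intro jj
    exact (hDprops d hd).2.1 _
  have hClsne : Cls.Nonempty := by
    obtain ⟨x, hx⟩ := hSne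
    refine ⟨(⟨0, hq⟩, fun _ => x), ?_⟩
    rw [hCls, Finset.mem_product]
    exact ⟨Finset.mem_univ _, by rw [Fintype.mem_piFinset]; intro _; exact hx⟩
  have hKD : Cls.card * K ≤ D.card := by
    have hXle : (q * n^s' * K) * R.choose (s'+1) ≤ n.choose (s'+1) := by
      have ha := extract_arith hq s' R K n hR2 hn
      have hRc : (s'+1).factorial * R.choose (s'+1) ≤ R^(s'+1) := by
        rw [← Nat.descFactorial_eq_factorial_mul_choose]
        exact Nat.descFactorial_le_pow R (s'+1)
      have hnc : (n+1-(s'+1))^(s'+1) ≤ (s'+1).factorial * n.choose (s'+1) := by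
        rw [← Nat.descFactorial_eq_factorial_mul_choose]
        exact Nat.pow_sub_le_descFactorial n (s'+1)
      have h1 : (s'+1).factorial * ((q * n^s' * K) * R.choose (s'+1)) ≤ (s'+1).factorial * n.choose (s'+1) := by
        calc (s'+1).factorial * ((q * n^s' * K) * R.choose (s'+1))
            = (q * n^s' * K) * ((s'+1).factorial * R.choose (s'+1)) := by ring
          _ ≤ (q * n^s' * K) * R^(s'+1) := Nat.mul_le_mul_left _ hRc
          _ ≤ (n + 1 - (s'+1))^(s'+1) := ha
          _ ≤ (s'+1).factorial * n.choose (s'+1) := hnc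
      exact Nat.le_of_mul_le_mul_left h1 (Nat.factorial_pos (s'+1))
    have hRcpos : 0 < R.choose (s'+1) := Nat.choose_pos hR1
    apply Nat.le_of_mul_le_mul_right _ hRcpos
    calc Cls.card * K * R.choose (s'+1) = (q * n^s' * K) * R.choose (s'+1) := by rw [hClscard]
      _ ≤ n.choose (s'+1) := hXle
      _ ≤ D.card * R.choose (s'+1) := hcancel
  obtain ⟨⟨i, e'⟩, _, hfb⟩ :=
    Finset.exists_le_card_fiber_of_mul_le_card_of_maps_to hmaps hClsne hKD
  set Fb := D.filter (fun d => ψ d = (i, e')) with hFb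
  have hFbprops : ∀ d ∈ Fb, d.1 = i ∧
      (∀ jj : Fin s', d.2 ((k i).succAbove jj) = e' jj) := by
    intro d hd
    have hψd : ψ d = (i, e') := (Finset.mem_filter.mp hd).2
    have h1 : d.1 = i := congrArg Prod.fst hψd
    have h2 := congrArg Prod.snd hψd
    simp only [hψ] at h2
    rw [h1] at h2
    exact ⟨h1, fun jj => congrFun h2 jj⟩
  have hFbD : ∀ d ∈ Fb, d ∈ D := fun d hd => (Finset.mem_filter.mp hd).1
  have hFbne : Fb.Nonempty := Finset.card_pos.mp (lt_of_lt_of_le hKpos hfb)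
  obtain ⟨d₀, hd₀⟩ := hFbne
  set e₀ := d₀.2 with he₀
  have hdeq : ∀ d ∈ Fb, d.2 = Function.update e₀ (k i) (d.2 (k i)) := by
    intro d hd
    funext j
    by_cases hj : j = k i
    · rw [hj, Function.update_self]
    · rw [Function.update_of_ne hj]
      obtain ⟨jj, hjj⟩ := Fin.exists_succAbove_eq hj
      have hA := (hFbprops d hd).2 jj
      have hB := (hFbprops d₀ hd₀).2 jj
      rw [hjj] at hA hB
      rw [hA, he₀, ← hB]
  set B := Fb.image (fun d => d.2 (k i)) with hB
  have hBcard : B.card = Fb.card := by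
    rw [hB]
    apply Finset.card_image_of_injOn
    intro d1 h1 d2 h2 h12
    simp only [Finset.mem_coe] at h1 h2
    simp only at h12
    have e1 := hdeq d1 h1
    have e2 := hdeq d2 h2
    have hsnd : d1.2 = d2.2 := by rw [e1, e2, h12]
    have hfst : d1.1 = d2.1 := by rw [(hFbprops d1 h1).1, (hFbprops d2 h2).1]
    exact Prod.ext hfst hsnd
  refine ⟨i, e₀, B, ?_, ?_, ?_⟩
  · rw [hBcard]; exact hfb
  · intro b hb
    obtain ⟨d, hd, rfl⟩ := Finset.mem_image.mp hb
    exact (hDprops d (hFbD d hd)).2.1 _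
  · intro b hb
    obtain ⟨d, hd, rfl⟩ := Finset.mem_image.mp hb
    have heq : Function.update e₀ (k i) (d.2 (k i)) = d.2 := (hdeq d hd).symm
    rw [heq]
    obtain ⟨p1, p2, p3⟩ := hDprops d (hFbD d hd)
    refine ⟨p1, fun j => p2 j, ?_⟩
    rw [← (hFbprops d hd).1]
    exact p3

end Dev3
section Dev4

variable {N q : ℕ}

/-- Index of a vertex in the sorted vertex list, as an element of `Fin (s+1)`. -/
def vidx (s : ℕ) (A : ThreeGraph) (a : ℕ) : Fin (s+1) :=
  if h : (A.verts.sort (·≤·)).idxOf a < s+1 then ⟨_, h⟩ else 0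

/-- Total map induced by `e : Fin (s+1) → Fin N` on vertices of `A`. -/
def liftE (s : ℕ) (A : ThreeGraph) (e : Fin (s+1) → Fin N) : ℕ → Fin N :=
  fun a => e (vidx s A a)

lemma vidx_coe {s : ℕ} {A : ThreeGraph} (hA : A.verts.card ≤ s) {a : ℕ} (ha : a ∈ A.verts) :
    (vidx s A a : ℕ) = (A.verts.sort (·≤·)).idxOf a := by
  have h1 : a ∈ A.verts.sort (·≤·) := (Finset.mem_sort _).mpr ha
  have h2 : (A.verts.sort (·≤·)).idxOf a < (A.verts.sort (·≤·)).length :=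
    List.idxOf_lt_length_iff.mpr h1
  rw [Finset.length_sort] at h2
  have h3 : (A.verts.sort (·≤·)).idxOf a < s+1 := by omega
  rw [vidx, dif_pos h3]

lemma vidx_injOn {s : ℕ} {A : ThreeGraph} (hA : A.verts.card ≤ s) :
    Set.InjOn (vidx s A) ↑A.verts := by
  intro x hx y hy hxy
  simp only [Finset.mem_coe] at hx hy
  have h := congrArg Fin.val hxy
  rw [vidx_coe hA hx, vidx_coe hA hy] at h
  exact (List.idxOf_inj ((Finset.mem_sort _).mpr hx)).mp h

lemma pad_embed (s : ℕ) (A : ThreeGraph) (hA : A.verts.card ≤ s)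
    (T : Finset (Fin N)) (hT : s+1 ≤ T.card)
    (f : ℕ → Fin N) (hfinj : Set.InjOn f ↑A.verts) (hfT : ∀ a ∈ A.verts, f a ∈ T) :
    ∃ e : Fin (s+1) → Fin N, Function.Injective e ∧ (∀ j, e j ∈ T) ∧
      ∀ a ∈ A.verts, e (vidx s A a) = f a := by
  classical
  set L1 := (A.verts.sort (·≤·)).map f with hL1
  have hL1len : L1.length = A.verts.card := by
    rw [hL1, List.length_map, Finset.length_sort]
  set P := T \ A.verts.image f with hP
  have himT : A.verts.image f ⊆ T := by
    intro x hx
    obtain ⟨a, ha, rfl⟩ := Finset.mem_image.mp hx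
    exact hfT a ha
  have hPcard : (s+1) - A.verts.card ≤ P.card := by
    have h1 : (A.verts.image f).card ≤ A.verts.card := Finset.card_image_le
    have h2 : P.card = T.card - (A.verts.image f).card := by
      rw [hP, Finset.card_sdiff_of_subset himT]
    omega
  set L2 := (P.sort (·≤·)).take ((s+1) - A.verts.card) with hL2
  have hL2len : L2.length = (s+1) - A.verts.card := by
    rw [hL2, List.length_take, Finset.length_sort]
    omega
  set LL := L1 ++ L2 with hLL
  have hLLlen : LL.length = s+1 := by
    rw [hLL, List.length_append, hL1len, hL2len]
    omega
  have hL1nd : L1.Nodup := by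
    rw [hL1]
    refine List.Nodup.map_on ?_ (Finset.sort_nodup _ _)
    intro x hx y hy hxy
    exact hfinj ((Finset.mem_sort _).mp hx) ((Finset.mem_sort _).mp hy) hxy
  have hL2nd : L2.Nodup := by
    rw [hL2]
    exact (List.take_sublist _ _).nodup (Finset.sort_nodup _ _)
  have hdisj : L1.Disjoint L2 := by
    intro x hx1 hx2
    rw [hL1, List.mem_map] at hx1
    obtain ⟨a, ha, rfl⟩ := hx1
    have haV : a ∈ A.verts := (Finset.mem_sort _).mp ha
    have hx2' : f a ∈ P := (Finset.mem_sort _).mp (List.mem_of_mem_take hx2)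
    rw [hP, Finset.mem_sdiff] at hx2'
    exact hx2'.2 (Finset.mem_image_of_mem f haV)
  have hLLnd : LL.Nodup := hL1nd.append hL2nd hdisj
  refine ⟨fun j => LL.get (Fin.cast hLLlen.symm j), ?_, ?_, ?_⟩
  · intro j1 j2 h12
    have := (hLLnd.get_inj_iff).mp h12
    have h2 := congrArg Fin.val this
    exact Fin.ext h2
  · intro j
    show LL.get (Fin.cast hLLlen.symm j) ∈ T
    have hmem : LL.get (Fin.cast hLLlen.symm j) ∈ LL := by
      rw [List.get_eq_getElem]
      exact List.getElem_mem _
    have hmem2 : LL.get (Fin.cast hLLlen.symm j) ∈ L1 ++ L2 := hmem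
    rcases List.mem_append.mp hmem2 with h | h
    · rw [hL1, List.mem_map] at h
      obtain ⟨a, ha, heq⟩ := h
      rw [← heq]
      exact hfT a ((Finset.mem_sort _).mp ha)
    · have hp : LL.get (Fin.cast hLLlen.symm j) ∈ P :=
        (Finset.mem_sort _).mp (List.mem_of_mem_take h)
      rw [hP, Finset.mem_sdiff] at hp
      exact hp.1
  · intro a ha
    have hidx : (A.verts.sort (·≤·)).idxOf a < A.verts.card := by
      rw [← Finset.length_sort (α := ℕ) (·≤·)]
      exact List.idxOf_lt_length_iff.mpr ((Finset.mem_sort _).mpr ha)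
    have hv := vidx_coe hA ha
    show LL.get (Fin.cast hLLlen.symm (vidx s A a)) = f a
    rw [List.get_eq_getElem]
    have hcast : ((Fin.cast hLLlen.symm (vidx s A a)) : ℕ) = (A.verts.sort (·≤·)).idxOf a := by
      rw [Fin.coe_cast, hv]
    have hlt1 : ((Fin.cast hLLlen.symm (vidx s A a)) : ℕ) < L1.length := by
      rw [hcast, hL1len]; exact hidx
    rw [List.getElem_append_left hlt1]
    have : L1[((Fin.cast hLLlen.symm (vidx s A a)) : ℕ)]'hlt1 =
        f ((A.verts.sort (·≤·))[((Fin.cast hLLlen.symm (vidx s A a)) : ℕ)]'(by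
          rw [Finset.length_sort]
          have := hlt1
          rwa [hL1len] at this)) := by
      simp only [hL1, List.getElem_map]
    rw [this]
    congr 1
    have hlt2 : ((Fin.cast hLLlen.symm (vidx s A a)) : ℕ) < (A.verts.sort (·≤·)).length := by
      rw [Finset.length_sort]
      have := hlt1
      rwa [hL1len] at this
    have := List.getElem_idxOf (x := a) (xs := A.verts.sort (·≤·)) (by
      rw [Finset.length_sort]; exact hidx)
    calc (A.verts.sort (·≤·))[((Fin.cast hLLlen.symm (vidx s A a)) : ℕ)]'hlt2
        = (A.verts.sort (·≤·))[(A.verts.sort (·≤·)).idxOf a]'(by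
            rw [Finset.length_sort]; exact hidx) := by
          simp only [hcast]
      _ = a := this

/-- Inversion: at minimal level `≤ 1`, a graph in 𝒰 has a crosscut. -/
lemma memU_crosscut {A : ThreeGraph} {l : ℕ} (h : MemU l A)
    (hl : l ≤ 1) (hmin : ∀ l', MemU l' A → l ≤ l') :
    ∃ W, W ⊆ A.verts ∧ ∀ e ∈ A.edges, (e ∩ W).card = 1 := by
  cases h with
  | zero _ h0 =>
    obtain ⟨V1, V2, V3, _, _, _, hunion, hedge⟩ := h0
    refine ⟨V1, ?_, fun e he => (hedge e he).1⟩
    rw [← hunion]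
    exact le_trans Finset.subset_union_left Finset.subset_union_left
  | one _ h1 => exact h1
  | mono i _ h' => exact absurd (hmin _ h') (by omega)
  | reduce i _ H F hR hH hF => omega

/-- Inversion: at minimal level `≥ 2`, a graph in 𝒰 is reducible. -/
lemma memU_reduce {A : ThreeGraph} {l : ℕ} (h : MemU l A)
    (hl : 2 ≤ l) (hmin : ∀ l', MemU l' A → l ≤ l') :
    ∃ H F, Reducible A H F ∧ MemU (l - 1) H ∧ MemU l F := by
  cases h with
  | zero _ h0 => omega
  | one _ h1 => omega
  | mono i _ h' => exact absurd (hmin _ h') (by omega)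
  | reduce i _ H F hR hH hF =>
    exact ⟨H, F, hR, by simpa using hH, hF⟩

/-- Bound exponent. -/
def FB (s q L m : ℕ) : ℕ := q^(L-1) * (s+3)^(3*L) * (m+2)

lemma FB_mono (s : ℕ) (hq : 1 ≤ q) {L m L' m' : ℕ} (hL : L ≤ L') (hm : m ≤ m') :
    FB s q L m ≤ FB s q L' m' := by
  unfold FB
  apply Nat.mul_le_mul
  apply Nat.mul_le_mul
  · exact Nat.pow_le_pow_right hq (by omega)
  · exact Nat.pow_le_pow_right (by omega) (by omega)
  · omega

lemma FB_lower (s : ℕ) (hq : 1 ≤ q) (L m : ℕ) (hL : 1 ≤ L) : s + 3 ≤ FB s q L m := by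
  unfold FB
  calc s + 3 ≤ (s+3) * 1 * 1 := by omega
    _ ≤ (s+3)^(3*L) * 1 * 1 := by
        apply Nat.mul_le_mul_right
        apply Nat.mul_le_mul_right
        calc s + 3 = (s+3)^1 := (pow_one _).symm
          _ ≤ (s+3)^(3*L) := Nat.pow_le_pow_right (by omega) (by omega)
    _ ≤ (s+3)^(3*L) * (m+2) * 1 := by
        apply Nat.mul_le_mul_right
        apply Nat.mul_le_mul_left
        omega
    _ = 1 * (s+3)^(3*L) * (m+2) := by ring
    _ ≤ q^(L-1) * (s+3)^(3*L) * (m+2) := by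
        apply Nat.mul_le_mul_right
        apply Nat.mul_le_mul_right
        exact Nat.one_le_pow _ _ (by omega)

lemma FB_base (s : ℕ) (hq : 1 ≤ q) (hs : 1 ≤ s) (L m : ℕ) (hL : 1 ≤ L) (hm : q ≤ m) :
    q*s*s + q*s + s + 2 ≤ FB s q L m := by
  have h1 : q*s*s + q*s + s + 2 ≤ q * (s+3)^3 := by
    have e1 : (s+3)^3 = s*s*s + 9*s*s + 27*s + 27 := by ring
    have h2 : s + 2 ≤ q * (s + 2) := Nat.le_mul_of_pos_left _ (by omega)
    nlinarith
  calc q*s*s + q*s + s + 2 ≤ q * (s+3)^3 := h1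
    _ ≤ FB s q 1 m := by
        unfold FB
        have : q^(1-1) = 1 := by rw [show (1:ℕ)-1 = 0 from rfl, pow_zero]
        rw [this]
        calc q * (s+3)^3 = (s+3)^(3*1) * q := by ring_nf
          _ ≤ (s+3)^(3*1) * (m+2) := Nat.mul_le_mul_left _ (by omega)
          _ = 1 * (s+3)^(3*1) * (m+2) := by ring
    _ ≤ FB s q L m := FB_mono s hq hL (le_refl m)

lemma FB_rec (s : ℕ) (hq : 1 ≤ q) (hs : 1 ≤ s) {L m : ℕ} (hL : 2 ≤ L) :
    FB s q L m + 2 + (s+2) * FB s q (L-1) (q*(s+1)) ≤ FB s q L (m+1) := by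
  have hstep : FB s q L (m+1) = FB s q L m + q^(L-1) * (s+3)^(3*L) := by
    unfold FB; ring
  have hkey : (s+2) * FB s q (L-1) (q*(s+1)) + 2 ≤ q^(L-1) * (s+3)^(3*L) := by
    have h1 : (s+2) * ((q*(s+1))+2) ≤ q * (s+3)^2 := by
      have h2 : s+2 ≤ q*(s+2) := Nat.le_mul_of_pos_left _ (by omega)
      nlinarith
    have h2 : 3*(L-1) + 2 + 1 = 3*L := by omega
    have h3 : q^(L-1) = q * q^(L-2) := by
      rw [← pow_succ']
      congr 1
      omega
    calc (s+2) * FB s q (L-1) (q*(s+1)) + 2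
        = (s+2) * (q^(L-1-1) * (s+3)^(3*(L-1)) * ((q*(s+1))+2)) + 2 := by rw [FB]
      _ = q^(L-2) * (s+3)^(3*(L-1)) * ((s+2) * ((q*(s+1))+2)) + 2 := by
          rw [show L-1-1 = L-2 from by omega]; ring
      _ ≤ q^(L-2) * (s+3)^(3*(L-1)) * (q * (s+3)^2) + 2 := by
          have := Nat.mul_le_mul_left (q^(L-2) * (s+3)^(3*(L-1))) h1
          omega
      _ = q^(L-1) * ((s+3)^(3*(L-1)) * (s+3)^2) + 2 := by rw [h3]; ring
      _ = q^(L-1) * (s+3)^(3*(L-1)+2) + 2 := by rw [pow_add]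
      _ ≤ q^(L-1) * (s+3)^(3*L) := by
          have e1 : (s+3)^(3*L) = (s+3)^(3*(L-1)+2) * (s+3) := by
            rw [← pow_succ]
            congr 1
            omega
          have e2 : q^(L-1) * (s+3)^(3*(L-1)+2) * 1 + 2 ≤ q^(L-1) * (s+3)^(3*(L-1)+2) * (s+3) := by
            have h4 : 0 < q^(L-1) * (s+3)^(3*(L-1)+2) := by positivity
            nlinarith
          calc q^(L-1) * (s+3)^(3*(L-1)+2) + 2 = q^(L-1) * (s+3)^(3*(L-1)+2) * 1 + 2 := by ring
            _ ≤ q^(L-1) * (s+3)^(3*(L-1)+2) * (s+3) := e2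
            _ = q^(L-1) * (s+3)^(3*L) := by rw [mul_assoc, ← e1]
  omega

end Dev4
section Dev5

theorem master (s : ℕ) (hs : 1 ≤ s) :
    ∀ (μ : ℕ) {N q : ℕ}, 1 ≤ q → ∀ (A : Fin q → ThreeGraph) (ℓv : Fin q → ℕ),
    (∀ i, MemU (ℓv i) (A i)) → (∀ i, (A i).verts.card ≤ s) →
    (∑ i, (s+2)^(ℓv i) * ((A i).verts.card + 1)) ≤ μ →
    ∀ (χ : Finset (Fin N) → Fin q) (S : Finset (Fin N)),
      (2*q) ^ (FB s q (max 1 (Finset.univ.sup ℓv)) (∑ i, ((A i).verts.card + 1))) ≤ S.card →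
      ∃ i, CopyIn χ S i (A i) := by
  intro μ
  induction μ using Nat.strong_induction_on with
  | _ μ IH =>
  intro N q hq A ℓv hA hsz hμ χ S hS
  classical
  -- minimal levels
  have hmem0 : ∀ i, MemU (sInf {l | MemU l (A i)}) (A i) := by
    intro i
    have h1 : ({l | MemU l (A i)} : Set ℕ).Nonempty := ⟨ℓv i, hA i⟩
    have h2 := Nat.sInf_mem h1
    exact h2
  set ℓm : Fin q → ℕ := fun i => sInf {l | MemU l (A i)} with hℓm
  have hmemm : ∀ i, MemU (ℓm i) (A i) := hmem0
  have hmin : ∀ i l, MemU l (A i) → ℓm i ≤ l := by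
    intro i l h
    exact Nat.sInf_le h
  have hlev : ∀ i, ℓm i ≤ ℓv i := fun i => hmin i _ (hA i)
  set m := ∑ i, ((A i).verts.card + 1) with hm
  set L := max 1 (Finset.univ.sup ℓm) with hL
  have hL1 : 1 ≤ L := le_max_left _ _
  have hLle : L ≤ max 1 (Finset.univ.sup ℓv) :=
    max_le_max (le_refl 1) (Finset.sup_mono_fun (fun i _ => hlev i))
  have hS' : (2*q) ^ (FB s q L m) ≤ S.card :=
    le_trans (Nat.pow_le_pow_right (by omega) (FB_mono s hq hLle (le_refl m))) hS
  have hmge : q ≤ m := by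
    rw [hm]
    calc q = ∑ _i : Fin q, 1 := by simp
      _ ≤ ∑ i, ((A i).verts.card + 1) := Finset.sum_le_sum (fun i _ => by omega)
  have hμ1 : 1 ≤ μ := by
    have h1 : q ≤ ∑ i, (s+2)^(ℓv i) * ((A i).verts.card + 1) := by
      calc q = ∑ _i : Fin q, 1 := by simp
        _ ≤ ∑ i, (s+2)^(ℓv i) * ((A i).verts.card + 1) := by
            apply Finset.sum_le_sum
            intro i _
            have h2 : 1 ≤ (s+2)^(ℓv i) := Nat.one_le_pow _ _ (by omega)
            have h3 : 1 ≤ (A i).verts.card + 1 := by omega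
            calc 1 = 1 * 1 := by ring
              _ ≤ (s+2)^(ℓv i) * ((A i).verts.card + 1) := Nat.mul_le_mul h2 h3
    omega
  -- measure with minimal levels
  have hμm : (∑ i, (s+2)^(ℓm i) * ((A i).verts.card + 1)) ≤ μ := by
    refine le_trans (Finset.sum_le_sum ?_) hμ
    intro i _
    exact Nat.mul_le_mul_right _ (Nat.pow_le_pow_right (by omega) (hlev i))
  by_cases hbase : ∀ i, ℓm i ≤ 1
  · -- base case: all slots have a crosscut
    have hcc : ∀ i, ∃ W, W ⊆ (A i).verts ∧ ∀ e ∈ (A i).edges, (e ∩ W).card = 1 :=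
      fun i => memU_crosscut (hmemm i) (hbase i) (hmin i)
    choose W hW1 hW2 using hcc
    apply base_case hq s hs A W hW1 hW2 hsz χ S
    refine le_trans (Nat.pow_le_pow_right (by omega) ?_) hS'
    exact FB_base s hq hs L m hL1 hmge
  · push_neg at hbase
    obtain ⟨i₀, hi₀⟩ := hbase
    have hi₀2 : 2 ≤ ℓm i₀ := by omega
    have hL2 : 2 ≤ L := by
      have h1 : ℓm i₀ ≤ Finset.univ.sup ℓm := Finset.le_sup (Finset.mem_univ i₀)
      have h2 : Finset.univ.sup ℓm ≤ L := le_max_right _ _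
      omega
    -- reduction data for reducible slots
    have hred : ∀ i, 2 ≤ ℓm i → ∃ HF : ThreeGraph × ThreeGraph,
        Reducible (A i) HF.1 HF.2 ∧ MemU (ℓm i - 1) HF.1 ∧ MemU (ℓm i) HF.2 := by
      intro i h2
      obtain ⟨H, F, h1, h2', h3⟩ := memU_reduce (hmemm i) h2 (hmin i)
      exact ⟨(H, F), h1, h2', h3⟩
    set Hsel : Fin q → ThreeGraph :=
      fun i => if h : 2 ≤ ℓm i then (hred i h).choose.1 else A i with hHseldef
    set Fsel : Fin q → ThreeGraph :=
      fun i => if h : 2 ≤ ℓm i then (hred i h).choose.2 else A i with hFseldef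
    have hHFspec : ∀ i (h : 2 ≤ ℓm i), Reducible (A i) (Hsel i) (Fsel i) ∧
        MemU (ℓm i - 1) (Hsel i) ∧ MemU (ℓm i) (Fsel i) := by
      intro i h
      have hc := (hred i h).choose_spec
      simp only [hHseldef, hFseldef, dif_pos h]
      exact hc
    set Usel : Fin q → Finset ℕ :=
      fun i => if h : 2 ≤ ℓm i then ((hHFspec i h).1).choose else ∅ with hUseldef
    set vsel : Fin q → ℕ :=
      fun i => if h : 2 ≤ ℓm i then ((hHFspec i h).1).choose_spec.choose else 0 with hvseldef
    have hRspec : ∀ i (h : 2 ≤ ℓm i),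
        Usel i ⊆ (A i).verts ∧ 2 ≤ (Usel i).card ∧ (Usel i).card < (A i).verts.card ∧
        (∀ e ∈ (A i).edges, (e ∩ Usel i).card ≠ 2) ∧
        vsel i ∉ (A i).verts ∧
        (Hsel i).verts = ((A i).verts \ Usel i) ∪ {vsel i} ∧
        (Hsel i).edges = (A i).edges.filter (fun e => e ∩ Usel i = ∅) ∪
          ((A i).edges.filter (fun e => (e ∩ Usel i).card = 1)).image
            (fun e => (e \ Usel i) ∪ {vsel i}) ∧
        (Fsel i).verts = Usel i ∧
        (Fsel i).edges = (A i).edges.filter (fun e => e ⊆ Usel i) := by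
      intro i h
      have hspec := ((hHFspec i h).1).choose_spec.choose_spec
      simp only [hUseldef, hvseldef, dif_pos h]
      exact hspec
    -- sizes of the new graphs
    have hHsz : ∀ i, (Hsel i).verts.card ≤ s := by
      intro i
      by_cases h : 2 ≤ ℓm i
      · obtain ⟨hU1, hU2, hU3, _, _, hHv, _, _, _⟩ := hRspec i h
        rw [hHv]
        have h1 : ((A i).verts \ Usel i).card = (A i).verts.card - (Usel i).card :=
          Finset.card_sdiff_of_subset hU1
        have h2 := hsz i
        calc (((A i).verts \ Usel i) ∪ {vsel i}).card
            ≤ ((A i).verts \ Usel i).card + ({vsel i} : Finset ℕ).card :=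
              Finset.card_union_le _ _
          _ ≤ s := by
              rw [Finset.card_singleton]
              omega
      · simp only [hHseldef, dif_neg h]
        exact hsz i
    have hFsz : ∀ i, 2 ≤ ℓm i → (Fsel i).verts.card ≤ s := by
      intro i h
      obtain ⟨_, _, hU3, _, _, _, _, hFv, _⟩ := hRspec i h
      rw [hFv]
      have := hsz i
      omega
    -- the lower-level tuple
    set A0 : Fin q → ThreeGraph := fun i => if 2 ≤ ℓm i then Hsel i else A i with hA0def
    set ℓ0 : Fin q → ℕ := fun i => if 2 ≤ ℓm i then ℓm i - 1 else ℓm i with hℓ0def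
    have hA0mem : ∀ i, MemU (ℓ0 i) (A0 i) := by
      intro i
      by_cases h : 2 ≤ ℓm i
      · simp only [hA0def, hℓ0def, if_pos h]
        exact (hHFspec i h).2.1
      · simp only [hA0def, hℓ0def, if_neg h]
        exact hmemm i
    have hA0sz : ∀ i, (A0 i).verts.card ≤ s := by
      intro i
      by_cases h : 2 ≤ ℓm i
      · simp only [hA0def, if_pos h]; exact hHsz i
      · simp only [hA0def, if_neg h]; exact hsz i
    -- measure decreases
    have hterm : ∀ i, (s+2)^(ℓ0 i) * ((A0 i).verts.card + 1)
        ≤ (s+2)^(ℓm i) * ((A i).verts.card + 1) := by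
      intro i
      by_cases h : 2 ≤ ℓm i
      · simp only [hA0def, hℓ0def, if_pos h]
        have h1 : (Hsel i).verts.card + 1 ≤ s + 1 := by have := hHsz i; omega
        have h2 : (s+2)^(ℓm i) = (s+2)^(ℓm i - 1) * (s+2) := by
          rw [← pow_succ]
          congr 1
          omega
        calc (s+2)^(ℓm i - 1) * ((Hsel i).verts.card + 1)
            ≤ (s+2)^(ℓm i - 1) * (s+2) := Nat.mul_le_mul_left _ (by omega)
          _ = (s+2)^(ℓm i) := h2.symm
          _ ≤ (s+2)^(ℓm i) * ((A i).verts.card + 1) := Nat.le_mul_of_pos_right _ (by omega)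
      · simp only [hA0def, hℓ0def, if_neg h]
        exact le_refl _
    have htermstrict : (s+2)^(ℓ0 i₀) * ((A0 i₀).verts.card + 1)
        < (s+2)^(ℓm i₀) * ((A i₀).verts.card + 1) := by
      simp only [hA0def, hℓ0def, if_pos hi₀2]
      have h1 : (Hsel i₀).verts.card + 1 ≤ s + 1 := by have := hHsz i₀; omega
      have h2 : (s+2)^(ℓm i₀) = (s+2)^(ℓm i₀ - 1) * (s+2) := by
        rw [← pow_succ]; congr 1; omega
      calc (s+2)^(ℓm i₀ - 1) * ((Hsel i₀).verts.card + 1)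
          < (s+2)^(ℓm i₀ - 1) * (s+2) := by
            exact (Nat.mul_lt_mul_left (Nat.pow_pos (by omega))).mpr (by omega)
        _ = (s+2)^(ℓm i₀) := h2.symm
        _ ≤ (s+2)^(ℓm i₀) * ((A i₀).verts.card + 1) := Nat.le_mul_of_pos_right _ (by omega)
    have hμ0 : (∑ i, (s+2)^(ℓ0 i) * ((A0 i).verts.card + 1)) ≤ μ - 1 := by
      have hlt : (∑ i, (s+2)^(ℓ0 i) * ((A0 i).verts.card + 1))
          < ∑ i, (s+2)^(ℓm i) * ((A i).verts.card + 1) :=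
        Finset.sum_lt_sum (fun i _ => hterm i) ⟨i₀, Finset.mem_univ i₀, htermstrict⟩
      omega
    -- parameters for the extraction
    set m0 := ∑ i, ((A0 i).verts.card + 1) with hm0
    set L0 := max 1 (Finset.univ.sup ℓ0) with hL0
    have hL0le : L0 ≤ L - 1 := by
      rw [hL0]
      apply max_le
      · omega
      · apply Finset.sup_le
        intro i _
        have hsup : ℓm i ≤ Finset.univ.sup ℓm := Finset.le_sup (Finset.mem_univ i)
        have hsup2 : Finset.univ.sup ℓm ≤ L := le_max_right _ _
        by_cases h : 2 ≤ ℓm i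
        · simp only [hℓ0def, if_pos h]
          omega
        · simp only [hℓ0def, if_neg h]
          omega
    have hm0le : m0 ≤ q * (s+1) := by
      rw [hm0]
      calc ∑ i, ((A0 i).verts.card + 1) ≤ ∑ _i : Fin q, (s+1) :=
            Finset.sum_le_sum (fun i _ => by have := hA0sz i; omega)
        _ = q * (s+1) := by simp [Finset.sum_const, Finset.card_univ, mul_comm]
    set R := (2*q) ^ (FB s q L0 m0) with hRdef
    set K := (2*q) ^ (FB s q L (m-1)) with hKdef
    have h2q : 2 ≤ 2*q := by omega
    have hFBR_ge : s+3 ≤ FB s q L0 m0 := FB_lower s hq L0 m0 (le_max_left _ _)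
    have hFBK_ge : s+3 ≤ FB s q L (m-1) := FB_lower s hq L (m-1) hL1
    have hpow_ge : ∀ x : ℕ, x + 1 ≤ 2^x := fun x => Nat.lt_two_pow_self (n := x)
    have hRge : s + 3 ≤ R := by
      calc s + 3 ≤ FB s q L0 m0 + 1 := by omega
        _ ≤ 2^(FB s q L0 m0) := hpow_ge _
        _ ≤ (2*q)^(FB s q L0 m0) := Nat.pow_le_pow_left h2q _
    have hKge : s + 3 ≤ K := by
      calc s + 3 ≤ FB s q L (m-1) + 1 := by omega
        _ ≤ 2^(FB s q L (m-1)) := hpow_ge _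
        _ ≤ (2*q)^(FB s q L (m-1)) := Nat.pow_le_pow_left h2q _
    have hR1 : s + 1 ≤ R := by omega
    have hR2' : 2^(s+3) ≤ R := by
      calc 2^(s+3) ≤ 2^(FB s q L0 m0) := Nat.pow_le_pow_right (by omega) hFBR_ge
        _ ≤ R := Nat.pow_le_pow_left (by omega) _
    have hexp : FB s q L (m-1) + 2 + (s+2) * FB s q L0 m0 ≤ FB s q L m := by
      have h1 : FB s q L0 m0 ≤ FB s q (L-1) (q*(s+1)) := FB_mono s hq hL0le hm0le
      have h2 := FB_rec s hq hs (q := q) (L := L) (m := m-1) hL2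
      have h3 : (s+2) * FB s q L0 m0 ≤ (s+2) * FB s q (L-1) (q*(s+1)) :=
        Nat.mul_le_mul_left _ h1
      have h4 : m - 1 + 1 = m := by omega
      rw [h4] at h2
      omega
    have hnineq : 2*q*(K + (s+1)) * R^(s+2) ≤ S.card := by
      have e1 : R^(s+2) = (2*q)^((s+2) * FB s q L0 m0) := by
        rw [hRdef, ← pow_mul, mul_comm (FB s q L0 m0)]
      have e2 : 2*q*(K + (s+1)) ≤ (2*q)^(FB s q L (m-1) + 2) := by
        calc 2*q*(K + (s+1)) ≤ 2*q*(2*K) := by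
              apply Nat.mul_le_mul_left
              omega
          _ ≤ (2*q)*((2*q)*K) := by
              apply Nat.mul_le_mul_left
              apply Nat.mul_le_mul_right
              omega
          _ = K * (2*q)^2 := by ring
          _ = (2*q)^(FB s q L (m-1)) * (2*q)^2 := by rw [hKdef]
          _ = (2*q)^(FB s q L (m-1) + 2) := by rw [← pow_add]
      calc 2*q*(K + (s+1)) * R^(s+2)
          ≤ (2*q)^(FB s q L (m-1) + 2) * (2*q)^((s+2) * FB s q L0 m0) := by
            rw [e1]
            exact Nat.mul_le_mul_right _ e2
        _ = (2*q)^(FB s q L (m-1) + 2 + (s+2) * FB s q L0 m0) := by rw [← pow_add]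
        _ ≤ (2*q)^(FB s q L m) := Nat.pow_le_pow_right (by omega) hexp
        _ ≤ S.card := hS'
    -- the prediacte for extraction
    set k : Fin q → Fin (s+1) := fun i => vidx s (Hsel i) (vsel i) with hkdef
    set Q : Fin q → (Fin (s+1) → Fin N) → Prop := fun i e =>
      2 ≤ ℓm i ∧ Set.InjOn (liftE s (Hsel i) e) ↑(Hsel i).verts ∧
        (∀ a ∈ (Hsel i).verts, liftE s (Hsel i) e a ∈ S) ∧
        (∀ ed ∈ (Hsel i).edges, χ (ed.image (liftE s (Hsel i) e)) = i) with hQdef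
    by_cases hfound : ∃ j, ℓm j ≤ 1 ∧ CopyIn χ S j (A j)
    · obtain ⟨j, _, h⟩ := hfound
      exact ⟨j, h⟩
    push_neg at hfound
    have hyp : ∀ T ∈ S.powersetCard R, ∃ (i : Fin q) (e : Fin (s+1) → Fin N),
        Function.Injective e ∧ (∀ j, e j ∈ T) ∧ Q i e := by
      intro T hT
      obtain ⟨hTS, hTcard⟩ := Finset.mem_powersetCard.mp hT
      obtain ⟨j, hj⟩ := IH (μ-1) (by omega) hq A0 ℓ0 hA0mem hA0sz hμ0 χ T
        (le_of_eq hTcard.symm)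
      have hj2 : 2 ≤ ℓm j := by
        by_contra h
        have hAj : A0 j = A j := by simp only [hA0def, if_neg h]
        rw [hAj] at hj
        exact hfound j (by omega) (hj.mono hTS)
      have hA0j : A0 j = Hsel j := by simp only [hA0def, if_pos hj2]
      rw [hA0j] at hj
      obtain ⟨f, hf1, hf2, hf3⟩ := hj
      obtain ⟨e, he1, he2, he3⟩ := pad_embed s (Hsel j) (hHsz j) T
        (by rw [hTcard]; exact hR1) f hf1 hf2
      refine ⟨j, e, he1, he2, ?_⟩
      simp only [hQdef]
      refine ⟨hj2, ?_, ?_, ?_⟩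
      · apply Set.InjOn.congr hf1
        intro a ha
        simp only [Finset.mem_coe] at ha
        exact (he3 a ha).symm
      · intro a ha
        show e (vidx s (Hsel j) a) ∈ S
        rw [he3 a ha]
        exact hTS (hf2 a ha)
      · intro ed hed
        have himg : ed.image (liftE s (Hsel j) e) = ed.image f := by
          apply Finset.image_congr
          intro a ha
          simp only [Finset.mem_coe] at ha
          exact he3 a ((Hsel j).edge_sub ed hed ha)
        rw [himg]
        exact hf3 ed hed
    obtain ⟨i, e₀, B, hBK, hBS, hBprop⟩ := extract hq s R K S hR1 hR2' hnineq k Q hyp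
    have hKpos : 0 < K := by omega
    have hBne : B.Nonempty := Finset.card_pos.mp (lt_of_lt_of_le hKpos hBK)
    obtain ⟨b₀, hb₀⟩ := hBne
    obtain ⟨hinj₀, hmem₀, hQ₀⟩ := hBprop b₀ hb₀
    simp only [hQdef] at hQ₀
    have hi2 : 2 ≤ ℓm i := hQ₀.1
    obtain ⟨hU1, hU2, hU3, hU4, hv1, hHv, hHe, hFv, hFe⟩ := hRspec i hi2
    -- facts about Hsel i vertices
    have hvmem : vsel i ∈ (Hsel i).verts := by
      rw [hHv]
      exact Finset.mem_union_right _ (Finset.mem_singleton_self _)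
    have haH : ∀ a ∈ (A i).verts, a ∉ Usel i → a ∈ (Hsel i).verts := by
      intro a ha hn
      rw [hHv]
      exact Finset.mem_union_left _ (Finset.mem_sdiff.mpr ⟨ha, hn⟩)
    have hanev : ∀ a ∈ (A i).verts, a ≠ vsel i := by
      intro a ha h
      exact hv1 (h ▸ ha)
    have hvidxne : ∀ a ∈ (A i).verts, a ∉ Usel i → vidx s (Hsel i) a ≠ k i := by
      intro a ha hn h
      have h1 : a ∈ (Hsel i).verts := haH a ha hn
      have h2 := vidx_injOn (hHsz i) (Finset.mem_coe.mpr h1) (Finset.mem_coe.mpr hvmem)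
        (by rw [hkdef] at h; exact h)
      exact hanev a ha h2
    -- behaviour of the lifted maps
    have hgbγ : ∀ b, ∀ a ∈ (A i).verts, a ∉ Usel i →
        liftE s (Hsel i) (Function.update e₀ (k i) b) a = liftE s (Hsel i) e₀ a := by
      intro b a ha hn
      show Function.update e₀ (k i) b (vidx s (Hsel i) a) = e₀ (vidx s (Hsel i) a)
      exact Function.update_of_ne (hvidxne a ha hn) _ _
    have hgbv : ∀ b, liftE s (Hsel i) (Function.update e₀ (k i) b) (vsel i) = b := by
      intro b
      show Function.update e₀ (k i) b (vidx s (Hsel i) (vsel i)) = b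
      rw [hkdef]
      exact Function.update_self _ _ _
    -- recursive call inside B
    set A1 : Fin q → ThreeGraph := Function.update A i (Fsel i) with hA1def
    have hA1mem : ∀ j, MemU (ℓm j) (A1 j) := by
      intro j
      by_cases h : j = i
      · subst h
        rw [hA1def, Function.update_self]
        exact (hHFspec j hi2).2.2
      · rw [hA1def, Function.update_of_ne h]
        exact hmemm j
    have hA1sz : ∀ j, (A1 j).verts.card ≤ s := by
      intro j
      by_cases h : j = i
      · subst h
        rw [hA1def, Function.update_self]
        exact hFsz j hi2
      · rw [hA1def, Function.update_of_ne h]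
        exact hsz j
    have hterm1 : ∀ j, (s+2)^(ℓm j) * ((A1 j).verts.card + 1)
        ≤ (s+2)^(ℓm j) * ((A j).verts.card + 1) := by
      intro j
      by_cases h : j = i
      · subst h
        rw [hA1def, Function.update_self]
        apply Nat.mul_le_mul_left
        rw [hFv]
        omega
      · rw [hA1def, Function.update_of_ne h]
    have hμ1' : (∑ j, (s+2)^(ℓm j) * ((A1 j).verts.card + 1)) ≤ μ - 1 := by
      have hlt : (∑ j, (s+2)^(ℓm j) * ((A1 j).verts.card + 1))
          < ∑ j, (s+2)^(ℓm j) * ((A j).verts.card + 1) := by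
        apply Finset.sum_lt_sum (fun j _ => hterm1 j)
        refine ⟨i, Finset.mem_univ i, ?_⟩
        rw [hA1def, Function.update_self]
        refine (Nat.mul_lt_mul_left (Nat.pow_pos (by omega))).mpr ?_
        rw [hFv]
        omega
      omega
    have hm1le : (∑ j, ((A1 j).verts.card + 1)) ≤ m - 1 := by
      have hlt : (∑ j, ((A1 j).verts.card + 1)) < ∑ j, ((A j).verts.card + 1) := by
        apply Finset.sum_lt_sum
        · intro j _
          by_cases h : j = i
          · subst h
            rw [hA1def, Function.update_self]
            rw [hFv]
            omega
          · rw [hA1def, Function.update_of_ne h]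
        · refine ⟨i, Finset.mem_univ i, ?_⟩
          rw [hA1def, Function.update_self, hFv]
          omega
      rw [hm]
      omega
    have hBbound : (2*q) ^ (FB s q (max 1 (Finset.univ.sup ℓm))
        (∑ j, ((A1 j).verts.card + 1))) ≤ B.card := by
      refine le_trans ?_ hBK
      rw [hKdef]
      apply Nat.pow_le_pow_right (by omega)
      exact FB_mono s hq (le_of_eq hL.symm) hm1le
    obtain ⟨j, hjcopy⟩ := IH (μ-1) (by omega) hq A1 ℓm hA1mem hA1sz hμ1' χ B hBbound
    by_cases hji : j = i
    · -- assemble the copy of A i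
      subst hji
      rw [hA1def, Function.update_self] at hjcopy
      obtain ⟨fF, hfF1, hfF2, hfF3⟩ := hjcopy
      rw [hFv] at hfF1 hfF2
      -- the final embedding
      set f : ℕ → Fin N := fun a => if a ∈ Usel j then fF a else liftE s (Hsel j) e₀ a with hfdef
      have hfU : ∀ a ∈ Usel j, f a = fF a := by
        intro a ha
        simp only [hfdef, if_pos ha]
      have hfH : ∀ a ∈ (A j).verts, a ∉ Usel j → f a = liftE s (Hsel j) e₀ a := by
        intro a ha hn
        simp only [hfdef, if_neg hn]
      have hfB : ∀ a ∈ Usel j, f a ∈ B := by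
        intro a ha
        rw [hfU a ha]
        exact hfF2 a ha
      -- injectivity
      refine ⟨j, f, ?_, ?_, ?_⟩
      · intro x hx y hy hxy
        simp only [Finset.mem_coe] at hx hy
        by_cases hxU : x ∈ Usel j <;> by_cases hyU : y ∈ Usel j
        · rw [hfU x hxU, hfU y hyU] at hxy
          exact hfF1 (Finset.mem_coe.mpr hxU) (Finset.mem_coe.mpr hyU) hxy
        · exfalso
          rw [hfU x hxU, hfH y hy hyU] at hxy
          have hb : fF x ∈ B := hfF2 x hxU
          have hinjb := (hBprop (fF x) hb).1
          have h1 : Function.update e₀ (k j) (fF x) (k j) = fF x :=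
            Function.update_self _ _ _
          have h2 : Function.update e₀ (k j) (fF x) (vidx s (Hsel j) y) =
              e₀ (vidx s (Hsel j) y) :=
            Function.update_of_ne (hvidxne y hy hyU) _ _
          have h3 : Function.update e₀ (k j) (fF x) (k j) =
              Function.update e₀ (k j) (fF x) (vidx s (Hsel j) y) := by
            rw [h1, h2]
            exact hxy
          exact (hvidxne y hy hyU) (hinjb h3).symm
        · exfalso
          rw [hfU y hyU, hfH x hx hxU] at hxy
          have hb : fF y ∈ B := hfF2 y hyU
          have hinjb := (hBprop (fF y) hb).1
          have h1 : Function.update e₀ (k j) (fF y) (k j) = fF y :=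
            Function.update_self _ _ _
          have h2 : Function.update e₀ (k j) (fF y) (vidx s (Hsel j) x) =
              e₀ (vidx s (Hsel j) x) :=
            Function.update_of_ne (hvidxne x hx hxU) _ _
          have h3 : Function.update e₀ (k j) (fF y) (k j) =
              Function.update e₀ (k j) (fF y) (vidx s (Hsel j) x) := by
            rw [h1, h2]
            exact hxy.symm
          exact (hvidxne x hx hxU) (hinjb h3).symm
        · rw [hfH x hx hxU, hfH y hy hyU] at hxy
          have hx' : x ∈ (Hsel j).verts := haH x hx hxU
          have hy' : y ∈ (Hsel j).verts := haH y hy hyU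
          have e1 : liftE s (Hsel j) e₀ x =
              liftE s (Hsel j) (Function.update e₀ (k j) b₀) x := (hgbγ b₀ x hx hxU).symm
          have e2 : liftE s (Hsel j) e₀ y =
              liftE s (Hsel j) (Function.update e₀ (k j) b₀) y := (hgbγ b₀ y hy hyU).symm
          rw [e1, e2] at hxy
          exact hQ₀.2.1 (Finset.mem_coe.mpr hx') (Finset.mem_coe.mpr hy') hxy
      · -- image in S
        intro a ha
        by_cases haU : a ∈ Usel j
        · rw [hfU a haU]
          exact hBS (hfF2 a haU)
        · rw [hfH a ha haU]
          have ha' : a ∈ (Hsel j).verts := haH a ha haU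
          have e1 : liftE s (Hsel j) e₀ a =
              liftE s (Hsel j) (Function.update e₀ (k j) b₀) a := (hgbγ b₀ a ha haU).symm
          rw [e1]
          exact hQ₀.2.2.1 a ha'
      · -- edges
        intro e he
        have hecard : e.card = 3 := (A j).edge_card e he
        have hesub : e ⊆ (A j).verts := (A j).edge_sub e he
        have hcle : (e ∩ Usel j).card ≤ 3 := by
          calc (e ∩ Usel j).card ≤ e.card := Finset.card_le_card Finset.inter_subset_left
            _ = 3 := hecard
        have hcne2 : (e ∩ Usel j).card ≠ 2 := hU4 e he
        have hcases : (e ∩ Usel j).card = 0 ∨ (e ∩ Usel j).card = 1 ∨ (e ∩ Usel j).card = 3 := by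
          omega
        rcases hcases with h0 | h1 | h3
        · -- no vertex in U
          have hempty : e ∩ Usel j = ∅ := Finset.card_eq_zero.mp h0
          have heH : e ∈ (Hsel j).edges := by
            rw [hHe]
            exact Finset.mem_union_left _ (Finset.mem_filter.mpr ⟨he, hempty⟩)
          have hmono := hQ₀.2.2.2 e heH
          have himg : e.image f = e.image (liftE s (Hsel j) (Function.update e₀ (k j) b₀)) := by
            apply Finset.image_congr
            intro a ha
            simp only [Finset.mem_coe] at ha
            have haU : a ∉ Usel j := by
              intro hc
              have : a ∈ e ∩ Usel j := Finset.mem_inter.mpr ⟨ha, hc⟩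
              rw [hempty] at this
              exact absurd this (Finset.notMem_empty a)
            rw [hfH a (hesub ha) haU]
            exact (hgbγ b₀ a (hesub ha) haU).symm
          rw [himg]
          exact hmono
        · -- exactly one vertex in U
          obtain ⟨u, hu⟩ := Finset.card_eq_one.mp h1
          have huU : u ∈ Usel j := by
            have : u ∈ e ∩ Usel j := hu ▸ Finset.mem_singleton_self u
            exact (Finset.mem_inter.mp this).2
          have hue : u ∈ e := by
            have : u ∈ e ∩ Usel j := hu ▸ Finset.mem_singleton_self u
            exact (Finset.mem_inter.mp this).1
          set e' := (e \ Usel j) ∪ {vsel j} with he'def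
          have he'H : e' ∈ (Hsel j).edges := by
            rw [hHe]
            apply Finset.mem_union_right
            exact Finset.mem_image.mpr ⟨e, Finset.mem_filter.mpr ⟨he, h1⟩, rfl⟩
          set b := fF u with hbdef
          have hbB : b ∈ B := hfF2 u huU
          have hQb := (hBprop b hbB).2.2
          simp only [hQdef] at hQb
          have hmono := hQb.2.2.2 e' he'H
          have himg : e.image f =
              e'.image (liftE s (Hsel j) (Function.update e₀ (k j) b)) := by
            have hsplit : e = (e \ Usel j) ∪ (e ∩ Usel j) := (Finset.sdiff_union_inter e _).symm
            have h1' : e.image f = (e \ Usel j).image f ∪ (e ∩ Usel j).image f := by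
              conv_lhs => rw [hsplit]
              exact Finset.image_union _ _
            have h2' : (e ∩ Usel j).image f = {b} := by
              rw [hu, Finset.image_singleton, hfU u huU]
            have h3' : e'.image (liftE s (Hsel j) (Function.update e₀ (k j) b)) =
                (e \ Usel j).image (liftE s (Hsel j) (Function.update e₀ (k j) b)) ∪ {b} := by
              rw [he'def, Finset.image_union, Finset.image_singleton, hgbv b]
            have h4' : (e \ Usel j).image f =
                (e \ Usel j).image (liftE s (Hsel j) (Function.update e₀ (k j) b)) := by
              apply Finset.image_congr
              intro a ha
              simp only [Finset.mem_coe] at ha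
              have ha' := Finset.mem_sdiff.mp ha
              rw [hfH a (hesub ha'.1) ha'.2]
              exact (hgbγ b a (hesub ha'.1) ha'.2).symm
            rw [h1', h2', h3', h4']
          rw [himg]
          exact hmono
        · -- edge inside U
          have hsub : e ⊆ Usel j := by
            have h1' : e ∩ Usel j = e := by
              apply Finset.eq_of_subset_of_card_le Finset.inter_subset_left
              omega
            exact Finset.inter_eq_left.mp h1'
          have heF : e ∈ (Fsel j).edges := by
            rw [hFe]
            exact Finset.mem_filter.mpr ⟨he, hsub⟩
          have hmono := hfF3 e heF
          have himg : e.image f = e.image fF := by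
            apply Finset.image_congr
            intro a ha
            simp only [Finset.mem_coe] at ha
            exact hfU a (hsub ha)
          rw [himg]
          exact hmono
    · rw [hA1def, Function.update_of_ne hji] at hjcopy
      exact ⟨j, hjcopy.mono hBS⟩

end Dev5

/-- For every `ℓ ≥ 1` and every 3-graph `G ∈ 𝒰_ℓ`, there is a constant
`C = C(G)` such that `r(G; q) ≤ 2 ^ (C · q^ℓ · log q)` for all `q ≥ 2`. -/
theorem stmt2 (ℓ : ℕ) (hℓ : 1 ≤ ℓ) (G : ThreeGraph) (hG : MemU ℓ G) :
    ∃ C : ℝ, 0 < C ∧ ∀ q : ℕ, 2 ≤ q →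
      (rq G q : ℝ) ≤ (2 : ℝ) ^ (C * (q : ℝ) ^ ℓ * Real.log q) := by
  classical
  set s := G.verts.card + 1 with hsdef
  have hs : 1 ≤ s := by omega
  set c₀ : ℕ := (s+3)^(3*ℓ+1) with hc₀def
  have hc₀pos : 0 < c₀ := by positivity
  refine ⟨3 * (c₀ : ℝ), by positivity, ?_⟩
  intro q hq
  have hq1 : 1 ≤ q := by omega
  set E := FB s q (max 1 (Finset.univ.sup (fun _ : Fin q => ℓ)))
      (∑ _i : Fin q, (G.verts.card + 1)) with hEdef
  set Nb := (2*q)^E with hNbdef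
  have hRam : RamseyProp (fun _ : Fin q => G) Nb := by
    intro χ
    have hcard : (Finset.univ : Finset (Fin Nb)).card = Nb := by
      rw [Finset.card_univ, Fintype.card_fin]
    obtain ⟨i, f, h1, _, h3⟩ := master s hs
      (∑ _i : Fin q, (s+2)^ℓ * (G.verts.card + 1)) hq1 (fun _ => G) (fun _ => ℓ)
      (fun _ => hG) (fun _ => by show G.verts.card ≤ s; omega) (le_refl _) χ Finset.univ
      (by rw [hcard])
    exact ⟨i, f, h1, h3⟩
  have hrq : rq G q ≤ Nb := by
    rw [rq, ramseyNumber]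
    exact Nat.sInf_le hRam
  have hEle : E ≤ c₀ * q^ℓ := by
    have hsup : (Finset.univ : Finset (Fin q)).sup (fun _ : Fin q => ℓ) = ℓ :=
      Finset.sup_const ⟨⟨0, by omega⟩, Finset.mem_univ _⟩ ℓ
    have hmax : max 1 ((Finset.univ : Finset (Fin q)).sup (fun _ : Fin q => ℓ)) = ℓ := by
      rw [hsup]
      exact max_eq_right hℓ
    have hmsum : (∑ _i : Fin q, (G.verts.card + 1)) = q * s := by
      rw [Finset.sum_const, Finset.card_univ, Fintype.card_fin, smul_eq_mul, hsdef]
    rw [hEdef, hmax, hmsum, FB, hc₀def]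
    have h1 : q*s+2 ≤ q*(s+2) := by
      have : 2 ≤ q * 2 := by omega
      calc q*s+2 ≤ q*s + q*2 := by omega
        _ = q*(s+2) := by ring
    have h2 : q^(ℓ-1) * q = q^ℓ := by
      rw [← pow_succ]
      congr 1
      omega
    calc q^(ℓ-1) * (s+3)^(3*ℓ) * (q*s+2)
        ≤ q^(ℓ-1) * (s+3)^(3*ℓ) * (q*(s+2)) := Nat.mul_le_mul_left _ h1
      _ = (q^(ℓ-1) * q) * ((s+3)^(3*ℓ) * (s+2)) := by ring
      _ ≤ (q^(ℓ-1) * q) * ((s+3)^(3*ℓ) * (s+3)) := by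
          apply Nat.mul_le_mul_left
          apply Nat.mul_le_mul_left
          omega
      _ = q^ℓ * (s+3)^(3*ℓ+1) := by rw [h2, ← pow_succ]
      _ = (s+3)^(3*ℓ+1) * q^ℓ := by ring
  -- pass to the reals
  have hcast : ((rq G q : ℕ) : ℝ) ≤ (Nb : ℝ) := Nat.cast_le.mpr hrq
  refine le_trans hcast ?_
  have hq2 : (2:ℝ) ≤ (q:ℝ) := by exact_mod_cast hq
  have hqpos : (0:ℝ) < (q:ℝ) := by linarith
  have hlogq : Real.log 2 ≤ Real.log q := Real.log_le_log (by norm_num) hq2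
  have hlog2pos : (0:ℝ) < Real.log 2 := Real.log_pos (by norm_num)
  have hlogqpos : (0:ℝ) < Real.log q := lt_of_lt_of_le hlog2pos hlogq
  have hNbcast : (Nb : ℝ) = ((2*q : ℕ) : ℝ)^E := by
    rw [hNbdef]
    push_cast
    ring
  have hlogNb : Real.log (Nb : ℝ) = (E : ℝ) * Real.log ((2*q : ℕ) : ℝ) := by
    rw [hNbcast, Real.log_pow]
  have hlog2q : Real.log ((2*q:ℕ):ℝ) ≤ 2 * Real.log q := by
    have h1 : ((2*q:ℕ):ℝ) = 2 * (q:ℝ) := by push_cast; ring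
    rw [h1, Real.log_mul (by norm_num) (by positivity)]
    linarith
  have hlog2qnn : (0:ℝ) ≤ Real.log ((2*q:ℕ):ℝ) := by
    apply Real.log_nonneg
    have : (1:ℝ) ≤ (q:ℝ) := by linarith
    push_cast
    linarith
  have hkey : Real.log (Nb:ℝ) ≤ (2 * (c₀:ℝ)) * (q:ℝ)^ℓ * Real.log q := by
    rw [hlogNb]
    have h1 : (E:ℝ) ≤ (c₀:ℝ) * (q:ℝ)^ℓ := by
      have := hEle
      have h2 : ((E:ℕ):ℝ) ≤ ((c₀ * q^ℓ : ℕ):ℝ) := Nat.cast_le.mpr this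
      push_cast at h2
      exact h2
    have hEnn : (0:ℝ) ≤ (E:ℝ) := Nat.cast_nonneg E
    have hc₀qnn : (0:ℝ) ≤ (c₀:ℝ) * (q:ℝ)^ℓ := by positivity
    calc (E:ℝ) * Real.log ((2*q:ℕ):ℝ) ≤ ((c₀:ℝ)*(q:ℝ)^ℓ) * (2*Real.log q) :=
          mul_le_mul h1 hlog2q hlog2qnn hc₀qnn
      _ = (2*(c₀:ℝ))*(q:ℝ)^ℓ*Real.log q := by ring
  have hfinal : Real.log (Nb:ℝ) ≤ (3*(c₀:ℝ) * (q:ℝ)^ℓ * Real.log q) * Real.log 2 := by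
    have h32 : (2:ℝ) ≤ 3 * Real.log 2 := by
      have := Real.log_two_gt_d9
      linarith
    have hbase : (0:ℝ) ≤ (c₀:ℝ) * (q:ℝ)^ℓ * Real.log q := by positivity
    calc Real.log (Nb:ℝ) ≤ (2*(c₀:ℝ))*(q:ℝ)^ℓ*Real.log q := hkey
      _ = 2 * ((c₀:ℝ)*(q:ℝ)^ℓ*Real.log q) := by ring
      _ ≤ (3*Real.log 2) * ((c₀:ℝ)*(q:ℝ)^ℓ*Real.log q) :=
          mul_le_mul_of_nonneg_right h32 hbase
      _ = (3*(c₀:ℝ) * (q:ℝ)^ℓ * Real.log q) * Real.log 2 := by ring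
  have hNbpos : (0:ℝ) < (Nb:ℝ) := by
    have : 0 < Nb := by
      rw [hNbdef]
      exact Nat.pow_pos (by omega)
    exact_mod_cast this
  calc (Nb:ℝ) = Real.exp (Real.log (Nb:ℝ)) := (Real.exp_log hNbpos).symm
    _ ≤ Real.exp ((3*(c₀:ℝ)*(q:ℝ)^ℓ*Real.log q) * Real.log 2) := Real.exp_le_exp.mpr hfinal
    _ = (2:ℝ) ^ (3*(c₀:ℝ)*(q:ℝ)^ℓ*Real.log q) := by
        rw [Real.rpow_def_of_pos (by norm_num : (0:ℝ) < 2)]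
        congr 1
        ring
    _ = (2:ℝ) ^ (3*(c₀:ℝ) * (q:ℝ)^ℓ * Real.log q) := by ring_nf
end

section
/- If G is a 3-uniform hypergraph that is not tripartite, then r(G;q) > 2^{2q/27} for all sufficiently large q. -/
lemma fin_succ_cases {n : ℕ} (i : Fin (n+1)) : i = 0 ∨ ∃ j : Fin n, i = j.succ :=
  Fin.eq_zero_or_eq_succ i

lemma pigeon_const (q s : ℕ) (c : Fin ((q+1)*s+1) → Fin (q+1)) :
    ∃ (u : Fin s → Fin ((q+1)*s+1)) (i : Fin (q+1)), StrictMono u ∧ ∀ a, c (u a) = i := by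
  obtain ⟨i, -, hi⟩ := Finset.exists_le_card_fiber_of_mul_le_card_of_maps_to
    (s := (Finset.univ : Finset (Fin ((q+1)*s+1))))
    (t := (Finset.univ : Finset (Fin (q+1)))) (f := c) (n := s)
    (fun a _ => Finset.mem_univ _) ⟨0, Finset.mem_univ _⟩
    (by simp)
  obtain ⟨T, hTsub, hTcard⟩ := Finset.exists_subset_card_eq hi
  refine ⟨fun a => T.orderEmbOfFin hTcard a, i, (T.orderEmbOfFin hTcard).strictMono, fun a => ?_⟩
  exact (Finset.mem_filter.mp (hTsub (T.orderEmbOfFin_mem hTcard a))).2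

lemma R2 (q : ℕ) : ∀ m : ℕ, ∃ M : ℕ, 0 < M ∧
    ∀ χ : Fin M → Fin M → Fin (q+1),
      ∃ (v : Fin m → Fin M) (c : Fin m → Fin (q+1)), StrictMono v ∧
        ∀ a b : Fin m, a < b → χ (v a) (v b) = c a := by
  intro m
  induction m with
  | zero =>
    exact ⟨1, Nat.one_pos, fun χ => ⟨fun a => a.elim0, fun a => a.elim0,
      fun a => a.elim0, fun a => a.elim0⟩⟩
  | succ m ih =>
    obtain ⟨M, hM, hR⟩ := ih
    refine ⟨(q+1) * M + 1, Nat.succ_pos _, fun χ => ?_⟩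
    have hcard : (Finset.univ.erase (0 : Fin ((q+1) * M + 1))).card = (q+1) * M := by
      rw [Finset.card_erase_of_mem (Finset.mem_univ _), Finset.card_univ, Fintype.card_fin]
      simp
    obtain ⟨c₀, -, hc₀⟩ := Finset.exists_le_card_fiber_of_mul_le_card_of_maps_to
      (s := Finset.univ.erase (0 : Fin ((q+1) * M + 1)))
      (t := (Finset.univ : Finset (Fin (q+1))))
      (f := fun x => χ 0 x) (n := M)
      (fun a _ => Finset.mem_univ _) ⟨0, Finset.mem_univ _⟩
      (by rw [hcard, Finset.card_univ, Fintype.card_fin])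
    obtain ⟨T, hTsub, hTcard⟩ := Finset.exists_subset_card_eq hc₀
    set e := T.orderEmbOfFin hTcard with he
    have heT : ∀ i, (e i) ∈ T := fun i => T.orderEmbOfFin_mem hTcard i
    have heS : ∀ i, χ 0 (e i) = c₀ := fun i => (Finset.mem_filter.mp (hTsub (heT i))).2
    have hene : ∀ i, (e i) ≠ 0 := fun i =>
      Finset.ne_of_mem_erase (Finset.mem_of_mem_filter _ (hTsub (heT i)))
    obtain ⟨v', c', hv'mono, hv'⟩ := hR (fun x y => χ (e x) (e y))
    refine ⟨Fin.cons 0 (fun a => e (v' a)), Fin.cons c₀ c', ?_, ?_⟩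
    · intro a b hab
      rcases fin_succ_cases b with rfl | ⟨b, rfl⟩
      · exact absurd hab (by simp)
      rcases fin_succ_cases a with rfl | ⟨a, rfl⟩
      · simp only [Fin.cons_zero, Fin.cons_succ]
        exact Fin.pos_of_ne_zero (hene _)
      · simp only [Fin.cons_succ]
        exact e.strictMono (hv'mono (by simpa [Fin.succ_lt_succ_iff] using hab))
    · intro a b hab
      rcases fin_succ_cases b with rfl | ⟨b, rfl⟩
      · exact absurd hab (by simp)
      rcases fin_succ_cases a with rfl | ⟨a, rfl⟩
      · simp only [Fin.cons_zero, Fin.cons_succ]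
        exact heS _
      · simp only [Fin.cons_succ]
        exact hv' a b (by simpa [Fin.succ_lt_succ_iff] using hab)

lemma R2clique (q s : ℕ) : ∃ M : ℕ, 0 < M ∧
    ∀ χ : Fin M → Fin M → Fin (q+1),
      ∃ (w : Fin s → Fin M) (i : Fin (q+1)), StrictMono w ∧
        ∀ a b : Fin s, a < b → χ (w a) (w b) = i := by
  obtain ⟨M, hM, hR⟩ := R2 q ((q+1)*s+1)
  refine ⟨M, hM, fun χ => ?_⟩
  obtain ⟨v, c, hv, hvc⟩ := hR χ
  obtain ⟨u, i, hu, hui⟩ := pigeon_const q s c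
  exact ⟨fun a => v (u a), i, hv.comp hu,
    fun a b hab => (hvc (u a) (u b) (hu hab)).trans (hui a)⟩

lemma R3 (q : ℕ) : ∀ m : ℕ, ∃ M : ℕ, 0 < M ∧
    ∀ χ : Fin M → Fin M → Fin M → Fin (q+1),
      ∃ (v : Fin m → Fin M) (c : Fin m → Fin (q+1)), StrictMono v ∧
        ∀ a b b' : Fin m, a < b → b < b' → χ (v a) (v b) (v b') = c a := by
  intro m
  induction m with
  | zero =>
    exact ⟨1, Nat.one_pos, fun χ => ⟨fun a => a.elim0, fun a => a.elim0,
      fun a => a.elim0, fun a => a.elim0⟩⟩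
  | succ m ih =>
    obtain ⟨M, hM, hR⟩ := ih
    obtain ⟨M₂, hM₂, hR₂⟩ := R2clique q M
    refine ⟨M₂ + 1, Nat.succ_pos _, fun χ => ?_⟩
    -- link coloring at vertex 0
    obtain ⟨w, i₀, hw, hwi⟩ := hR₂ (fun x y => χ 0 x.succ y.succ)
    obtain ⟨v', c', hv'mono, hv'⟩ := hR (fun x y z => χ (w x).succ (w y).succ (w z).succ)
    refine ⟨Fin.cons 0 (fun a => (w (v' a)).succ), Fin.cons i₀ c', ?_, ?_⟩
    · intro a b hab
      rcases fin_succ_cases b with rfl | ⟨b, rfl⟩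
      · exact absurd hab (by simp)
      rcases fin_succ_cases a with rfl | ⟨a, rfl⟩
      · simp only [Fin.cons_zero, Fin.cons_succ]
        exact Fin.succ_pos _
      · simp only [Fin.cons_succ]
        exact Fin.succ_lt_succ_iff.mpr (hw (hv'mono (by simpa [Fin.succ_lt_succ_iff] using hab)))
    · intro a b b' hab hbb'
      rcases fin_succ_cases b' with rfl | ⟨b', rfl⟩
      · exact absurd hbb' (by simp)
      rcases fin_succ_cases b with rfl | ⟨b, rfl⟩
      · exact absurd hab (by simp)
      rcases fin_succ_cases a with rfl | ⟨a, rfl⟩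
      · simp only [Fin.cons_zero, Fin.cons_succ]
        exact hwi _ _ (hv'mono (by simpa [Fin.succ_lt_succ_iff] using hbb'))
      · simp only [Fin.cons_succ]
        exact hv' a b b' (by simpa [Fin.succ_lt_succ_iff] using hab)
          (by simpa [Fin.succ_lt_succ_iff] using hbb')

lemma R3clique (q s : ℕ) : ∃ M : ℕ, 0 < M ∧
    ∀ χ : Fin M → Fin M → Fin M → Fin (q+1),
      ∃ (w : Fin s → Fin M) (i : Fin (q+1)), StrictMono w ∧
        ∀ a b c : Fin s, a < b → b < c → χ (w a) (w b) (w c) = i := by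
  obtain ⟨M, hM, hR⟩ := R3 q ((q+1)*s+1)
  refine ⟨M, hM, fun χ => ?_⟩
  obtain ⟨v, c, hv, hvc⟩ := hR χ
  obtain ⟨u, i, hu, hui⟩ := pigeon_const q s c
  exact ⟨fun a => v (u a), i, hv.comp hu,
    fun a b b' hab hbb' => (hvc (u a) (u b) (u b') (hu hab) (hu hbb')).trans (hui a)⟩

lemma card_noninj :
    (Finset.univ.filter (fun u : Fin 3 → Fin 3 => ¬ Function.Injective u)).card = 21 := by
  decide

def prodSub {A B : Type*} (Q : A → Prop) : {y : A × B // Q y.1} ≃ {a : A // Q a} × B where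
  toFun y := (⟨y.1.1, y.2⟩, y.1.2)
  invFun z := ⟨(z.1.1, z.2), z.1.2⟩
  left_inv := by rintro ⟨⟨a, b⟩, h⟩; rfl
  right_inv := by rintro ⟨⟨a, h⟩, b⟩; rfl

lemma count_bad (N : ℕ) (hN : 3 ≤ N) (s : Finset (Fin N)) (hs : s.card = 3) :
    (Finset.univ.filter (fun h : Fin N → Fin 3 => (s.image h).card ≠ 3)).card
      = 21 * 3 ^ (N - 3) := by
  classical
  have hP : ∀ h : Fin N → Fin 3, s.image h =
      Finset.univ.image (fun x : {x // x ∈ s} => h x.1) := by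
    intro h
    ext y
    simp
  rw [← Fintype.card_subtype]
  let E1 : (Fin N → Fin 3) ≃ ({x // x ∈ s} → Fin 3) × ({x // ¬ x ∈ s} → Fin 3) :=
    (Equiv.arrowCongr (Equiv.sumCompl (· ∈ s)).symm (Equiv.refl (Fin 3))).trans
      (Equiv.sumArrowEquivProdArrow _ _ _)
  have hE1 : ∀ h : Fin N → Fin 3, (E1 h).1 = fun x : {x // x ∈ s} => h x.1 :=
    fun h => rfl
  let Q : ({x // x ∈ s} → Fin 3) → Prop := fun g => (Finset.univ.image g).card ≠ 3
  have e2 : {h : Fin N → Fin 3 // (s.image h).card ≠ 3} ≃ {y : _ × _ // Q y.1} :=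
    Equiv.subtypeEquiv E1 (by
      intro h
      simp only [Q]
      rw [hP h, hE1 h])
  rw [Fintype.card_congr (e2.trans (prodSub Q)), Fintype.card_prod]
  have hcs : Fintype.card {x // x ∈ s} = 3 := by
    simpa [hs] using (Fintype.card_coe s)
  have hcompl : Fintype.card {x : Fin N // ¬ x ∈ s} = N - 3 := by
    rw [Fintype.card_subtype_compl]
    simp [hcs]
  congr 1
  · -- card {g // Q g} = 21
    let ebar : {x // x ∈ s} ≃ Fin 3 := Fintype.equivFinOfCardEq hcs
    let E2 : ({x // x ∈ s} → Fin 3) ≃ (Fin 3 → Fin 3) :=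
      Equiv.arrowCongr ebar (Equiv.refl (Fin 3))
    have e3 : {g // Q g} ≃ {u : Fin 3 → Fin 3 // ¬ Function.Injective u} := by
      refine Equiv.subtypeEquiv E2 ?_
      intro g
      have hgid : g = (E2 g) ∘ ebar := by funext x; simp [E2]
      have hE2g : E2 g = g ∘ ⇑ebar.symm := by funext x; simp [E2]
      have h1 : (Finset.univ.image g).card = 3 ↔ Function.Injective g := by
        constructor
        · intro hc
          have h' := Finset.card_image_iff.mp (by rw [hc, Finset.card_univ, hcs])
          rw [Finset.coe_univ] at h'
          exact fun a b hab => h' (Set.mem_univ a) (Set.mem_univ b) hab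
        · intro hg
          rw [Finset.card_image_of_injective _ hg, Finset.card_univ, hcs]
      have h2 : Function.Injective g ↔ Function.Injective (E2 g) := by
        constructor
        · intro hg
          rw [hE2g]
          exact hg.comp ebar.symm.injective
        · intro hg
          rw [hgid]
          exact hg.comp ebar.injective
      exact (not_congr h1).trans (not_congr h2)
    rw [Fintype.card_congr e3, Fintype.card_subtype, card_noninj]
  · rw [Fintype.card_fun, hcompl, Fintype.card_fin]

lemma phf_exists (q N : ℕ) (hN : 3 ≤ N) (h : N.choose 3 * 21 ^ q < 27 ^ q) :
    ∃ F : Fin q → Fin N → Fin 3,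
      ∀ s : Finset (Fin N), s.card = 3 → ∃ j : Fin q, (s.image (F j)).card = 3 := by
  classical
  set Bad := (Finset.univ : Finset (Fin q → Fin N → Fin 3)).filter
    (fun F => ∃ s ∈ (Finset.univ : Finset (Fin N)).powersetCard 3,
      ∀ j, (s.image (F j)).card ≠ 3) with hBad
  have hsub : Bad ⊆ ((Finset.univ : Finset (Fin N)).powersetCard 3).biUnion
      (fun s => Finset.univ.filter (fun F => ∀ j, (s.image (F j)).card ≠ 3)) := by
    intro F hF
    rw [hBad, Finset.mem_filter] at hF
    obtain ⟨-, s, hs, hj⟩ := hF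
    exact Finset.mem_biUnion.mpr ⟨s, hs, Finset.mem_filter.mpr ⟨Finset.mem_univ _, hj⟩⟩
  have hcard_s : ∀ s ∈ (Finset.univ : Finset (Fin N)).powersetCard 3,
      (Finset.univ.filter (fun F : Fin q → Fin N → Fin 3 =>
        ∀ j, (s.image (F j)).card ≠ 3)).card = (21 * 3 ^ (N - 3)) ^ q := by
    intro s hs
    have hs3 : s.card = 3 := (Finset.mem_powersetCard.mp hs).2
    have : Finset.univ.filter (fun F : Fin q → Fin N → Fin 3 =>
        ∀ j, (s.image (F j)).card ≠ 3) =
        Fintype.piFinset (fun _ : Fin q =>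
          Finset.univ.filter (fun h : Fin N → Fin 3 => (s.image h).card ≠ 3)) := by
      ext F
      simp [Fintype.mem_piFinset]
    rw [this, Fintype.card_piFinset]
    simp [count_bad N hN s hs3]
  have hBadcard : Bad.card ≤ N.choose 3 * (21 * 3 ^ (N - 3)) ^ q := by
    calc Bad.card ≤ _ := Finset.card_le_card hsub
    _ ≤ ∑ s ∈ (Finset.univ : Finset (Fin N)).powersetCard 3,
        (Finset.univ.filter (fun F : Fin q → Fin N → Fin 3 =>
          ∀ j, (s.image (F j)).card ≠ 3)).card := Finset.card_biUnion_le
    _ = ∑ s ∈ (Finset.univ : Finset (Fin N)).powersetCard 3, (21 * 3 ^ (N - 3)) ^ q :=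
        Finset.sum_congr rfl hcard_s
    _ = N.choose 3 * (21 * 3 ^ (N - 3)) ^ q := by
        rw [Finset.sum_const, Finset.card_powersetCard, Finset.card_univ, Fintype.card_fin,
          smul_eq_mul]
  have harith : N.choose 3 * (21 * 3 ^ (N - 3)) ^ q < (3 ^ N) ^ q := by
    calc N.choose 3 * (21 * 3 ^ (N - 3)) ^ q
        = (N.choose 3 * 21 ^ q) * (3 ^ (N - 3)) ^ q := by rw [mul_pow]; ring
    _ < 27 ^ q * (3 ^ (N - 3)) ^ q := by
        exact mul_lt_mul_of_pos_right h (by positivity)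
    _ = (27 * 3 ^ (N - 3)) ^ q := (mul_pow _ _ _).symm
    _ = (3 ^ N) ^ q := by
        congr 1
        have : (27 : ℕ) = 3 ^ 3 := rfl
        rw [this, ← pow_add, Nat.add_sub_cancel' hN]
  have htot : Fintype.card (Fin q → Fin N → Fin 3) = (3 ^ N) ^ q := by
    simp [Fintype.card_fun]
  have hlt : Bad.card < Fintype.card (Fin q → Fin N → Fin 3) := by
    rw [htot]; exact lt_of_le_of_lt hBadcard harith
  have : ∃ F, F ∉ Bad := by
    by_contra hc
    push_neg at hc
    have : (Finset.univ : Finset (Fin q → Fin N → Fin 3)) ⊆ Bad := fun F _ => hc F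
    have := Finset.card_le_card this
    rw [Finset.card_univ] at this
    omega
  obtain ⟨F, hF⟩ := this
  refine ⟨F, fun s hs => ?_⟩
  rw [hBad, Finset.mem_filter] at hF
  push_neg at hF
  have := hF (Finset.mem_univ F) s (by simpa [Finset.mem_powersetCard_univ] using hs)
  obtain ⟨j, hj⟩ := this
  exact ⟨j, by simpa using hj⟩

lemma arith_key (q : ℕ) (hq : 54 ≤ q) :
    (2 ^ (2 * q / 27 + 1)).choose 3 * 21 ^ q < 27 ^ q := by
  set k := 2 * q / 27 + 1 with hkdef
  have hs2 : 2 ≤ q / 27 := by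
    rw [Nat.le_div_iff_mul_le (by norm_num)]
    omega
  set s := q / 27 with hsdef
  have hq27 : 27 * s + q % 27 = q := Nat.div_add_mod q 27
  have hr : q % 27 < 27 := Nat.mod_lt _ (by norm_num)
  have hk : k ≤ 2 * s + 2 := by
    have : 2 * q / 27 < 2 * s + 2 := by
      rw [Nat.div_lt_iff_lt_mul (by norm_num)]
      omega
    omega
  have h1 : (2 ^ k).choose 3 ≤ 2 ^ (3 * k) := by
    calc (2 ^ k).choose 3 ≤ (2 ^ k) ^ 3 := Nat.choose_le_pow _ _
    _ = 2 ^ (3 * k) := by rw [← pow_mul, mul_comm]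
  have h2 : 2 ^ (3 * k) ≤ 2 ^ (6 * s + 6) := Nat.pow_le_pow_right (by norm_num) (by omega)
  -- core inequality
  obtain ⟨t, hst⟩ : ∃ t, s = 2 + t := ⟨s - 2, by omega⟩
  have key : ∀ t : ℕ, 64 * 64 ^ (2 + t) * (21 ^ 27) ^ (2 + t) < (27 ^ 27) ^ (2 + t) := by
    intro t
    induction t with
    | zero => norm_num
    | succ t ih =>
      have hstep : (64 : ℕ) * 21 ^ 27 ≤ 27 ^ 27 := by norm_num
      calc 64 * 64 ^ (2 + (t + 1)) * (21 ^ 27) ^ (2 + (t + 1))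
          = (64 * 64 ^ (2 + t) * (21 ^ 27) ^ (2 + t)) * (64 * 21 ^ 27) := by ring
      _ < ((27 ^ 27) ^ (2 + t)) * (64 * 21 ^ 27) :=
          mul_lt_mul_of_pos_right ih (by positivity)
      _ ≤ ((27 ^ 27) ^ (2 + t)) * 27 ^ 27 := Nat.mul_le_mul_left _ hstep
      _ = (27 ^ 27) ^ (2 + (t + 1)) := by ring
  have core : 2 ^ (6 * s + 6) * 21 ^ (27 * s) < 27 ^ (27 * s) := by
    have e1 : 2 ^ (6 * s + 6) = 64 * 64 ^ s := by
      rw [pow_add, pow_mul]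
      norm_num [mul_comm]
    have e2 : (21 : ℕ) ^ (27 * s) = (21 ^ 27) ^ s := by rw [pow_mul]
    have e3 : (27 : ℕ) ^ (27 * s) = (27 ^ 27) ^ s := by rw [pow_mul]
    rw [e1, e2, e3, hst]
    exact key t
  calc (2 ^ k).choose 3 * 21 ^ q ≤ 2 ^ (6 * s + 6) * 21 ^ q :=
        Nat.mul_le_mul_right _ (h1.trans h2)
  _ = (2 ^ (6 * s + 6) * 21 ^ (27 * s)) * 21 ^ (q % 27) := by
      rw [mul_assoc, ← pow_add]
      exact congrArg (fun n => 2 ^ (6 * s + 6) * 21 ^ n) (by omega)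
  _ < 27 ^ (27 * s) * 21 ^ (q % 27) := mul_lt_mul_of_pos_right core (by positivity)
  _ ≤ 27 ^ (27 * s) * 27 ^ (q % 27) :=
      Nat.mul_le_mul_left _ (Nat.pow_le_pow_left (by norm_num) _)
  _ = 27 ^ q := by rw [← pow_add]; exact congrArg (fun n => 27 ^ n) (by omega)

lemma ramseyProp_mono {q : ℕ} (Gs : Fin q → ThreeGraph) {N N' : ℕ}
    (h : RamseyProp Gs N) (hNN : N ≤ N') : RamseyProp Gs N' := by
  intro χ
  obtain ⟨i, f, hinj, hmono⟩ := h (fun e => χ (e.image (Fin.castLE hNN)))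
  refine ⟨i, Fin.castLE hNN ∘ f, ?_, ?_⟩
  · exact fun a ha b hb hab => hinj ha hb (Fin.castLE_injective hNN hab)
  · intro e he
    have h2 := hmono e he
    rw [← Finset.image_image] at *
    exact h2

lemma ramseyProp_exists (G : ThreeGraph) (q : ℕ) (hq : 0 < q) :
    ∃ N, RamseyProp (fun _ : Fin q => G) N := by
  obtain ⟨q', rfl⟩ : ∃ q', q = q' + 1 := ⟨q - 1, by omega⟩
  obtain ⟨M, hM, hR⟩ := R3clique q' G.verts.card
  refine ⟨M, fun χ => ?_⟩
  obtain ⟨w, i, hw, hwi⟩ := hR (fun x y z => χ {x, y, z})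
  have key : ∀ a b c : Fin G.verts.card, a ≠ b → a ≠ c → b ≠ c →
      χ {w a, w b, w c} = i := by
    intro a b c hab hac hbc
    rcases lt_trichotomy a b with h1 | h1 | h1
    · rcases lt_trichotomy b c with h2 | h2 | h2
      · exact hwi a b c h1 h2
      · exact absurd h2 hbc
      · rcases lt_trichotomy a c with h3 | h3 | h3
        · have hset : ({w a, w b, w c} : Finset (Fin M)) = {w a, w c, w b} := by
            ext t; simp; tauto
          rw [hset]; exact hwi a c b h3 h2
        · exact absurd h3 hac
        · have hset : ({w a, w b, w c} : Finset (Fin M)) = {w c, w a, w b} := by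
            ext t; simp; tauto
          rw [hset]; exact hwi c a b h3 h1
    · exact absurd h1 hab
    · rcases lt_trichotomy a c with h3 | h3 | h3
      · have hset : ({w a, w b, w c} : Finset (Fin M)) = {w b, w a, w c} := by
          ext t; simp; tauto
        rw [hset]; exact hwi b a c h1 h3
      · exact absurd h3 hac
      · rcases lt_trichotomy b c with h2 | h2 | h2
        · have hset : ({w a, w b, w c} : Finset (Fin M)) = {w b, w c, w a} := by
            ext t; simp; tauto
          rw [hset]; exact hwi b c a h2 h3
        · exact absurd h2 hbc
        · have hset : ({w a, w b, w c} : Finset (Fin M)) = {w c, w b, w a} := by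
            ext t; simp; tauto
          rw [hset]; exact hwi c b a h2 h1
  set σ := G.verts.orderIsoOfFin rfl with hσ
  classical
  set f : ℕ → Fin M := fun t => if h : t ∈ G.verts then w (σ.symm ⟨t, h⟩) else ⟨0, hM⟩
    with hfdef
  have hfval : ∀ (t : ℕ) (h : t ∈ G.verts), f t = w (σ.symm ⟨t, h⟩) := fun t h => dif_pos h
  refine ⟨i, f, ?_, ?_⟩
  · intro a ha b hb hfab
    rw [Finset.mem_coe] at ha hb
    have ha' : a ∈ G.verts := by exact_mod_cast ha
    have hb' : b ∈ G.verts := by exact_mod_cast hb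
    rw [hfval a ha', hfval b hb'] at hfab
    have := σ.symm.injective (hw.injective hfab)
    exact congrArg Subtype.val (by exact_mod_cast this)
  · intro e he
    obtain ⟨x, y, z, hxy, hxz, hyz, rfl⟩ := Finset.card_eq_three.mp (G.edge_card e he)
    have hsub := G.edge_sub _ he
    have hx : x ∈ G.verts := hsub (by simp)
    have hy : y ∈ G.verts := hsub (by simp)
    have hz : z ∈ G.verts := hsub (by simp)
    have himg : ({x, y, z} : Finset ℕ).image f
        = {w (σ.symm ⟨x, hx⟩), w (σ.symm ⟨y, hy⟩), w (σ.symm ⟨z, hz⟩)} := by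
      rw [Finset.image_insert, Finset.image_insert, Finset.image_singleton,
        hfval x hx, hfval y hy, hfval z hz]
    rw [himg]
    apply key
    · intro hc
      exact hxy (congrArg Subtype.val (σ.symm.injective hc : (⟨x, hx⟩ : G.verts) = ⟨y, hy⟩))
    · intro hc
      exact hxz (congrArg Subtype.val (σ.symm.injective hc : (⟨x, hx⟩ : G.verts) = ⟨z, hz⟩))
    · intro hc
      exact hyz (congrArg Subtype.val (σ.symm.injective hc : (⟨y, hy⟩ : G.verts) = ⟨z, hz⟩))

lemma not_ramsey (G : ThreeGraph) (hG : ¬ Tripartite G) (q N : ℕ) (hq : 0 < q)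
    (F : Fin q → Fin N → Fin 3)
    (hF : ∀ s : Finset (Fin N), s.card = 3 → ∃ j : Fin q, (s.image (F j)).card = 3) :
    ¬ RamseyProp (fun _ : Fin q => G) N := by
  classical
  intro hR
  set χ : Finset (Fin N) → Fin q := fun e =>
    if h : ∃ j : Fin q, (e.image (F j)).card = 3 then h.choose else ⟨0, hq⟩ with hχ
  obtain ⟨i, f, hinj, hmono⟩ := hR χ
  apply hG
  -- the tripartition
  refine ⟨G.verts.filter (fun t => F i (f t) = 0), G.verts.filter (fun t => F i (f t) = 1),
    G.verts.filter (fun t => F i (f t) = 2), ?_, ?_, ?_, ?_, ?_⟩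
  · rw [Finset.disjoint_left]; intro t ht ht'
    simp only [Finset.mem_filter] at ht ht'
    rw [ht.2] at ht'
    exact absurd ht'.2 (by decide)
  · rw [Finset.disjoint_left]; intro t ht ht'
    simp only [Finset.mem_filter] at ht ht'
    rw [ht.2] at ht'
    exact absurd ht'.2 (by decide)
  · rw [Finset.disjoint_left]; intro t ht ht'
    simp only [Finset.mem_filter] at ht ht'
    rw [ht.2] at ht'
    exact absurd ht'.2 (by decide)
  · ext t
    simp only [Finset.mem_union, Finset.mem_filter]
    constructor
    · rintro ((⟨h, -⟩ | ⟨h, -⟩) | ⟨h, -⟩) <;> exact h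
    · intro h
      have h3 : F i (f t) = 0 ∨ F i (f t) = 1 ∨ F i (f t) = 2 := by
        have : ∀ x : Fin 3, x = 0 ∨ x = 1 ∨ x = 2 := by decide
        exact this _
      tauto
  · intro e he
    have he3 : e.card = 3 := G.edge_card e he
    have hesub : e ⊆ G.verts := G.edge_sub e he
    have hinj_e : Set.InjOn f ↑e := hinj.mono (by exact_mod_cast hesub)
    have himc : (e.image f).card = 3 := by
      rw [Finset.card_image_of_injOn hinj_e, he3]
    have hex : ∃ j : Fin q, ((e.image f).image (F j)).card = 3 := hF _ himc
    have hci : χ (e.image f) = i := hmono e he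
    have hspec : ((e.image f).image (F hex.choose)).card = 3 := hex.choose_spec
    rw [hχ] at hci
    simp only [dif_pos hex] at hci
    rw [hci] at hspec
    rw [Finset.image_image] at hspec
    -- g := F i ∘ f is injective on e and hits every value
    have hinj_g : Set.InjOn (F i ∘ f) ↑e := by
      have := Finset.card_image_iff.mp (by rw [hspec, he3])
      exact this
    have huniv : e.image (F i ∘ f) = Finset.univ := by
      apply Finset.eq_univ_of_card
      rw [hspec]
      simp
    have hhit : ∀ k : Fin 3, ∃ t ∈ e, F i (f t) = k := by
      intro k
      have : k ∈ e.image (F i ∘ f) := by rw [huniv]; exact Finset.mem_univ _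
      obtain ⟨t, ht, hgt⟩ := Finset.mem_image.mp this
      exact ⟨t, ht, hgt⟩
    have hcard : ∀ k : Fin 3, (e ∩ G.verts.filter (fun t => F i (f t) = k)).card = 1 := by
      intro k
      obtain ⟨t₀, ht₀e, ht₀⟩ := hhit k
      rw [Finset.card_eq_one]
      refine ⟨t₀, ?_⟩
      ext t
      simp only [Finset.mem_inter, Finset.mem_filter, Finset.mem_singleton]
      constructor
      · rintro ⟨hte, -, htk⟩
        exact hinj_g (by exact_mod_cast hte) (by exact_mod_cast ht₀e)
          (by simp [Function.comp, htk, ht₀])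
      · rintro rfl
        exact ⟨ht₀e, hesub ht₀e, ht₀⟩
    exact ⟨hcard 0, hcard 1, hcard 2⟩

/-- If `G` is a 3-uniform hypergraph that is not tripartite, then
`r(G; q) > 2 ^ (2q/27)` for all sufficiently large `q`. -/
theorem stmt3 (G : ThreeGraph) (hG : ¬ Tripartite G) :
    ∃ q₀ : ℕ, ∀ q : ℕ, q₀ ≤ q → (2 : ℝ) ^ (2 * (q : ℝ) / 27) < (rq G q : ℝ) := by
  refine ⟨54, fun q hq => ?_⟩
  have hqpos : 0 < q := by omega
  set k := 2 * q / 27 + 1 with hkdef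
  set N := 2 ^ k with hNdef
  have h3N : 3 ≤ N := by
    have hk4 : 2 ≤ k := by
      have : 1 ≤ 2 * q / 27 := by
        rw [Nat.le_div_iff_mul_le (by norm_num)]
        omega
      omega
    calc (3 : ℕ) ≤ 2 ^ 2 := by norm_num
    _ ≤ 2 ^ k := Nat.pow_le_pow_right (by norm_num) hk4
  obtain ⟨F, hF⟩ := phf_exists q N h3N (arith_key q hq)
  have hnotR : ¬ RamseyProp (fun _ : Fin q => G) N := not_ramsey G hG q N hqpos F hF
  obtain ⟨M, hM⟩ := ramseyProp_exists G q hqpos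
  have hgt : N < rq G q := by
    by_contra hle
    push_neg at hle
    have hmem : RamseyProp (fun _ : Fin q => G) (rq G q) :=
      Nat.sInf_mem (⟨M, hM⟩ : Set.Nonempty {N' | RamseyProp (fun _ : Fin q => G) N'})
    exact hnotR (ramseyProp_mono _ hmem hle)
  -- real arithmetic
  have hdm : 27 * (2 * q / 27) + (2 * q) % 27 = 2 * q := Nat.div_add_mod (2 * q) 27
  have hmod : (2 * q) % 27 < 27 := Nat.mod_lt _ (by norm_num)
  have hexp : 2 * (q : ℝ) / 27 < (k : ℝ) := by
    have hkc : (k : ℝ) = ((2 * q / 27 : ℕ) : ℝ) + 1 := by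
      rw [hkdef]; push_cast; ring
    rw [hkc]
    rw [div_lt_iff₀ (by norm_num : (0:ℝ) < 27)]
    have : (2 * q : ℕ) < 27 * (2 * q / 27 : ℕ) + 27 := by omega
    have hcast : (2 * (q:ℝ)) < 27 * ((2 * q / 27 : ℕ) : ℝ) + 27 := by exact_mod_cast this
    linarith
  calc (2 : ℝ) ^ (2 * (q : ℝ) / 27) < (2 : ℝ) ^ (k : ℝ) :=
        (Real.rpow_lt_rpow_left_iff (by norm_num)).mpr hexp
  _ = ((N : ℕ) : ℝ) := by
      rw [Real.rpow_natCast, hNdef]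
      push_cast
      ring
  _ < (rq G q : ℝ) := by exact_mod_cast hgt
end
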